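/- arXiv:1501.06836 — 7 statements merged into one kernel-verified Lean document; each statement's English description precedes it below -/
import Mathlib

section
/- Let 0 < q < 2, c ≥ 1, f, g continuous nondecreasing, f positive, g(a) ≥ 0. If φ solves the radial ODE Cauchy problem on [0,R) with φ(0)=a, φ'(0)=0, then for all r ∈ [0,R): r ≤ 2 (c/(2-q))^{1/(2-q)} ∫_a^{φ(r)} dt / [ (∫_a^t f(s) ds)^{1/2} + (∫_a^t g⁺(s) ds)^{1/(2-q)} ]. -/
open Real MeasureTheory Set Filter

lemma my_mono {u u' : ℝ → ℝ} {x y : ℝ} (hxy : x ≤ y)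
    (hc : ContinuousOn u (Set.Icc x y))
    (hd : ∀ s ∈ Set.Ioo x y, HasDerivAt u (u' s) s)
    (h0 : ∀ s ∈ Set.Ioo x y, 0 ≤ u' s) : u x ≤ u y := by
  have H := monotoneOn_of_deriv_nonneg (convex_Icc x y) hc
    (fun s hs => by
      rw [interior_Icc] at hs
      exact (hd s hs).differentiableAt.differentiableWithinAt)
    (fun s hs => by
      rw [interior_Icc] at hs
      rw [(hd s hs).deriv]; exact h0 s hs)
  exact H (Set.left_mem_Icc.2 hxy) (Set.right_mem_Icc.2 hxy) hxy

lemma my_limit_le {v v' : ℝ → ℝ} {s l : ℝ} (hs : 0 < s)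
    (hd : ∀ t ∈ Set.Ioc 0 s, HasDerivAt v (v' t) t)
    (h0 : ∀ t ∈ Set.Ioc 0 s, 0 ≤ v' t)
    (hlim : Filter.Tendsto v (nhdsWithin 0 (Set.Ioi 0)) (nhds l)) :
    l ≤ v s := by
  apply le_of_tendsto hlim
  filter_upwards [Ioo_mem_nhdsGT_of_mem (Set.mem_Ico.2 ⟨le_refl (0:ℝ), hs⟩)] with ε hε
  exact my_mono (le_of_lt hε.2)
    (fun t ht => (hd t ⟨lt_of_lt_of_le hε.1 ht.1, ht.2⟩).continuousAt.continuousWithinAt)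
    (fun t ht => hd t ⟨lt_trans hε.1 ht.1, le_of_lt ht.2⟩)
    (fun t ht => h0 t ⟨lt_trans hε.1 ht.1, le_of_lt ht.2⟩)

lemma my_lin0 (k : ℝ) : Filter.Tendsto (fun t : ℝ => k * t) (nhdsWithin 0 (Set.Ioi 0)) (nhds 0) := by
  have h3 : Filter.Tendsto (fun t : ℝ => k * t) (nhds 0) (nhds (k * 0)) :=
    (continuous_const.mul continuous_id).tendsto 0
  rw [mul_zero] at h3
  exact h3.mono_left nhdsWithin_le_nhds

lemma my_numeric {c q : ℝ} (hc : 1 ≤ c) (hq0 : 0 < q) (hq2 : q < 2) :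
    ((2 - q)/c) ^ (1/(2-q)) ≤ (2/c) ^ ((1:ℝ)/2) := by
  have hx0 : (0:ℝ) < 2 - q := by linarith
  have hc0 : (0:ℝ) < c := by linarith
  have hxc : 0 < (2-q)/c := div_pos hx0 hc0
  have h2c : 0 < 2/c := by positivity
  rw [Real.rpow_def_of_pos hxc, Real.rpow_def_of_pos h2c]
  apply Real.exp_le_exp.2
  rw [Real.log_div hx0.ne' hc0.ne', Real.log_div two_ne_zero hc0.ne']
  have hlogc : 0 ≤ Real.log c := Real.log_nonneg hc
  have h1 : Real.log (2 - q) - Real.log 2 ≤ (2-q)/2 - 1 := by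
    have := Real.log_le_sub_one_of_pos (show (0:ℝ) < (2-q)/2 by linarith)
    rwa [Real.log_div hx0.ne' two_ne_zero] at this
  have h2 : Real.log 2 < 1 := by
    have := Real.log_two_lt_d9
    linarith
  have hq2' : 2 - q ≤ 2 := by linarith
  rw [mul_one_div, mul_one_div, div_le_div_iff₀ hx0 two_pos]
  nlinarith [mul_nonneg hlogc (sub_nonneg.2 hq2')]

set_option maxHeartbeats 2000000 in
theorem stmt11 (c q R a : ℝ) (hc : 1 ≤ c) (hq0 : 0 < q) (hq2 : q < 2) (hR : 0 < R)
    (f g φ : ℝ → ℝ)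
    (hf : Continuous f) (hfpos : ∀ t, 0 < f t) (hfmono : Monotone f)
    (hg : Continuous g) (hgmono : Monotone g) (hga : 0 ≤ g a)
    (hφc : ContinuousOn φ (Set.Ico 0 R))
    (hφ2 : ContDiffOn ℝ 2 φ (Set.Ioo 0 R))
    (hφa : φ 0 = a)
    (hd0 : Filter.Tendsto (deriv φ) (nhdsWithin 0 (Set.Ioi 0)) (nhds 0))
    (hd2 : ∃ L, Filter.Tendsto (deriv (deriv φ)) (nhdsWithin 0 (Set.Ioi 0)) (nhds L))
    (hode : ∀ r ∈ Set.Ioo 0 R,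
      deriv (deriv φ) r + (c - 1) / r * deriv φ r = f (φ r) + g (φ r) * |deriv φ r| ^ q) :
    ∀ r ∈ Set.Ico 0 R,
      r ≤ 2 * (c / (2 - q)) ^ (1 / (2 - q)) *
          ∫ t in a..φ r,
            1 / ((∫ s in a..t, f s) ^ ((1 : ℝ) / 2) +
              (∫ s in a..t, max (g s) 0) ^ (1 / (2 - q))) := by
  obtain ⟨L, hL⟩ := hd2
  set D := deriv φ with hDdef
  set D2 := deriv D with hD2def
  have hc0 : (0:ℝ) < c := by linarith
  have hIoo : IsOpen (Set.Ioo (0:ℝ) R) := isOpen_Ioo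
  have hφd : ∀ s ∈ Set.Ioo 0 R, HasDerivAt φ (D s) s := fun s hs =>
    ((hφ2.differentiableOn (by norm_num)).differentiableAt (hIoo.mem_nhds hs)).hasDerivAt
  have hDC1 : ContDiffOn ℝ 1 D (Set.Ioo 0 R) := hφ2.deriv_of_isOpen hIoo (by norm_num)
  have hDd : ∀ s ∈ Set.Ioo 0 R, HasDerivAt D (D2 s) s := fun s hs =>
    ((hDC1.differentiableOn (by norm_num)).differentiableAt (hIoo.mem_nhds hs)).hasDerivAt
  have hD2cont : ContinuousOn D2 (Set.Ioo 0 R) := hDC1.continuousOn_deriv_of_isOpen hIoo le_rfl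
  -- φ tends to a from the right at 0
  have hφ0 : Filter.Tendsto φ (nhdsWithin 0 (Set.Ioi 0)) (nhds a) := by
    have h1 : Filter.Tendsto φ (nhdsWithin 0 (Set.Ico 0 R)) (nhds a) := by
      have h2 := hφc 0 ⟨le_refl 0, hR⟩
      rw [ContinuousWithinAt, hφa] at h2; exact h2
    rw [← nhdsWithin_Ioo_eq_nhdsGT hR]
    exact h1.mono_left (nhdsWithin_mono 0 Set.Ioo_subset_Ico_self)
  -- linear bounds on D near 0
  have hlin : ∀ δ > (0:ℝ), ∃ r₁, 0 < r₁ ∧ r₁ ≤ R ∧ ∀ s ∈ Set.Ioo 0 r₁,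
      (L - δ) * s ≤ D s ∧ D s ≤ (L + δ) * s := by
    intro δ hδ
    have h := hL.eventually (Metric.ball_mem_nhds L hδ)
    rw [eventually_nhdsWithin_iff, Metric.eventually_nhds_iff] at h
    obtain ⟨ε, hε, hball⟩ := h
    refine ⟨min ε R, lt_min hε hR, min_le_right _ _, ?_⟩
    intro s hs
    have hsR : s < R := lt_of_lt_of_le hs.2 (min_le_right _ _)
    have hD2close : ∀ t ∈ Set.Ioc 0 s, |D2 t - L| < δ := by
      intro t ht
      have : dist t 0 < ε := by
        rw [Real.dist_eq, sub_zero, abs_of_pos ht.1]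
        exact lt_of_le_of_lt ht.2 (lt_of_lt_of_le hs.2 (min_le_left _ _))
      have := hball this ht.1
      rwa [Real.dist_eq] at this
    constructor
    · have key : (0:ℝ) ≤ D s - (L - δ) * s := my_limit_le
        (v := fun t => D t - (L - δ) * t) (v' := fun t => D2 t - (L - δ)) hs.1
        (fun t ht => by
          have h1 := (hDd t ⟨ht.1, lt_of_le_of_lt ht.2 hsR⟩).sub
            ((hasDerivAt_id t).const_mul (L - δ))
          rw [mul_one] at h1; exact h1)
        (fun t ht => by
          show (0:ℝ) ≤ D2 t - (L - δ)
          have h2 := abs_lt.1 (hD2close t ht); linarith [h2.1])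
        (by simpa using hd0.sub (my_lin0 (L - δ)))
      linarith
    · have key : (0:ℝ) ≤ (L + δ) * s - D s := my_limit_le
        (v := fun t => (L + δ) * t - D t) (v' := fun t => (L + δ) - D2 t) hs.1
        (fun t ht => by
          have h1 := ((hasDerivAt_id t).const_mul (L + δ)).sub
            (hDd t ⟨ht.1, lt_of_le_of_lt ht.2 hsR⟩)
          rw [mul_one] at h1; exact h1)
        (fun t ht => by
          show (0:ℝ) ≤ (L + δ) - D2 t
          have h2 := abs_lt.1 (hD2close t ht); linarith [h2.2])
        (by simpa using (my_lin0 (L + δ)).sub hd0)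
      linarith
  -- D s / s tends to L
  have hratio : Filter.Tendsto (fun s => D s / s) (nhdsWithin 0 (Set.Ioi 0)) (nhds L) := by
    rw [Metric.tendsto_nhdsWithin_nhds]
    intro δ hδ
    obtain ⟨r₁, hr₁0, hr₁R, hbd⟩ := hlin (δ/2) (by linarith)
    refine ⟨r₁, hr₁0, ?_⟩
    intro s hs hdist
    rw [Real.dist_eq, sub_zero] at hdist
    have hs0 : 0 < s := hs
    have hsr : s < r₁ := by rwa [abs_of_pos hs0] at hdist
    obtain ⟨hlo, hhi⟩ := hbd s ⟨hs0, hsr⟩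
    rw [Real.dist_eq]
    have h1 : L - δ/2 ≤ D s / s := by
      rw [le_div_iff₀ hs0]; linarith
    have h2 : D s / s ≤ L + δ/2 := by
      rw [div_le_iff₀ hs0]; linarith
    rw [abs_lt]
    constructor <;> linarith
  -- the value of L
  have hLval : c * L = f a := by
    have hmem : Set.Ioo (0:ℝ) R ∈ nhdsWithin (0:ℝ) (Set.Ioi 0) :=
      Ioo_mem_nhdsGT_of_mem (Set.mem_Ico.2 ⟨le_refl 0, hR⟩)
    have heq : ∀ᶠ s in nhdsWithin (0:ℝ) (Set.Ioi 0),
        f (φ s) + g (φ s) * |D s| ^ q = D2 s + (c - 1) * (D s / s) := by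
      filter_upwards [hmem] with s hs
      have h1 := hode s hs
      have h2 : (c - 1) / s * D s = (c - 1) * (D s / s) := by ring
      linarith [h1, h2.symm ▸ h1]
    have lim1 : Filter.Tendsto (fun s => D2 s + (c - 1) * (D s / s))
        (nhdsWithin 0 (Set.Ioi 0)) (nhds (L + (c - 1) * L)) :=
      hL.add (hratio.const_mul _)
    have habs : Filter.Tendsto (fun s => |D s|) (nhdsWithin 0 (Set.Ioi 0)) (nhds 0) := by
      have := (continuous_abs.tendsto (0:ℝ)).comp hd0
      rw [abs_zero] at this; exact this
    have hpowq : Filter.Tendsto (fun s => |D s| ^ q) (nhdsWithin 0 (Set.Ioi 0)) (nhds 0) := by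
      have hco : Filter.Tendsto (fun x : ℝ => x ^ q) (nhds 0) (nhds ((0:ℝ) ^ q)) :=
        (Real.continuousAt_rpow_const 0 q (Or.inr hq0.le)).tendsto
      rw [Real.zero_rpow hq0.ne'] at hco
      exact hco.comp habs
    have lim2 : Filter.Tendsto (fun s => f (φ s) + g (φ s) * |D s| ^ q)
        (nhdsWithin 0 (Set.Ioi 0)) (nhds (f a + g a * 0)) :=
      ((hf.tendsto a).comp hφ0).add (((hg.tendsto a).comp hφ0).mul hpowq)
    have := tendsto_nhds_unique (lim2.congr' (by filter_upwards [heq] with s h; exact h)) lim1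
    rw [mul_zero, add_zero] at this
    linarith
  have hLpos : 0 < L := by nlinarith [hfpos a]
  -- master derivation on a good interval
  have hgood : ∀ b, 0 < b → b ≤ R → (∀ s ∈ Set.Ioo 0 b, 0 ≤ D2 s) →
      ∀ s ∈ Set.Ioo 0 b,
        (f (φ s) + g (φ s) * |D s| ^ q) / c ≤ D2 s ∧ 0 ≤ D s ∧ a ≤ φ s := by
    intro b hb0 hbR hb2
    have hsubR : Set.Ioo 0 b ⊆ Set.Ioo 0 R := fun t ht => ⟨ht.1, lt_of_lt_of_le ht.2 hbR⟩
    have hDnn : ∀ s ∈ Set.Ioo 0 b, 0 ≤ D s := by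
      intro s hs
      exact my_limit_le (v := D) (v' := D2) hs.1
        (fun t ht => hDd t (hsubR ⟨ht.1, lt_of_le_of_lt ht.2 hs.2⟩))
        (fun t ht => hb2 t ⟨ht.1, lt_of_le_of_lt ht.2 hs.2⟩) hd0
    have hDmono : ∀ x y, x ∈ Set.Ioo 0 b → y ∈ Set.Ioo 0 b → x ≤ y → D x ≤ D y := by
      intro x y hx hy hxy
      exact my_mono hxy
        (fun t ht => (hDd t (hsubR ⟨lt_of_lt_of_le hx.1 ht.1,
          lt_of_le_of_lt ht.2 hy.2⟩)).continuousAt.continuousWithinAt)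
        (fun t ht => hDd t (hsubR ⟨lt_trans hx.1 ht.1, lt_trans ht.2 hy.2⟩))
        (fun t ht => hb2 t ⟨lt_trans hx.1 ht.1, lt_trans ht.2 hy.2⟩)
    have hφmono : ∀ x y, 0 ≤ x → x ≤ y → y < b → φ x ≤ φ y := by
      intro x y hx hxy hyb
      exact my_mono (u := φ) (u' := D) hxy
        (hφc.mono (fun t ht => ⟨le_trans hx ht.1, lt_of_le_of_lt ht.2
          (lt_of_lt_of_le hyb hbR)⟩))
        (fun t ht => hφd t (hsubR ⟨lt_of_le_of_lt hx ht.1, lt_trans ht.2 hyb⟩))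
        (fun t ht => hDnn t ⟨lt_of_le_of_lt hx ht.1, lt_trans ht.2 hyb⟩)
    have hφa' : ∀ s, 0 ≤ s → s < b → a ≤ φ s := by
      intro s h0 hsb
      have := hφmono 0 s le_rfl h0 hsb
      rwa [hφa] at this
    have hgnn : ∀ s ∈ Set.Ioo 0 b, 0 ≤ g (φ s) := fun s hs =>
      le_trans hga (hgmono (hφa' s hs.1.le hs.2))
    have hRHSmono : ∀ x y, x ∈ Set.Ioo 0 b → y ∈ Set.Ioo 0 b → x ≤ y →
        f (φ x) + g (φ x) * |D x| ^ q ≤ f (φ y) + g (φ y) * |D y| ^ q := by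
      intro x y hx hy hxy
      have hfx : f (φ x) ≤ f (φ y) := hfmono (hφmono x y hx.1.le hxy hy.2)
      have habs : |D x| ^ q ≤ |D y| ^ q := by
        rw [abs_of_nonneg (hDnn x hx), abs_of_nonneg (hDnn y hy)]
        exact Real.rpow_le_rpow (hDnn x hx) (hDmono x y hx hy hxy) hq0.le
      have hmul : g (φ x) * |D x| ^ q ≤ g (φ y) * |D y| ^ q :=
        mul_le_mul (hgmono (hφmono x y hx.1.le hxy hy.2)) habs
          (Real.rpow_nonneg (abs_nonneg _) q) (le_trans (hgnn x hx)
            (hgmono (hφmono x y hx.1.le hxy hy.2)))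
      linarith
    have hRHSnn : ∀ s ∈ Set.Ioo 0 b, 0 ≤ f (φ s) + g (φ s) * |D s| ^ q := by
      intro s hs
      have h1 := hfpos (φ s)
      have h2 := mul_nonneg (hgnn s hs) (Real.rpow_nonneg (abs_nonneg (D s)) q)
      linarith
    have htrick : ∀ s ∈ Set.Ioo 0 b,
        D s ≤ s * (f (φ s) + g (φ s) * |D s| ^ q) / c := by
      intro s hs
      set M := f (φ s) + g (φ s) * |D s| ^ q with hMdef
      have hMnn : 0 ≤ M := hRHSnn s hs
      have key : (0:ℝ) ≤ M * (s ^ c / c) - s ^ (c-1) * D s := by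
        refine my_limit_le (v := fun t => M * (t ^ c / c) - t ^ (c-1) * D t)
          (v' := fun t => M * t ^ (c-1) -
            ((c-1) * t ^ (c-1-1) * D t + t ^ (c-1) * D2 t)) hs.1 ?_ ?_ ?_
        · intro t ht
          have htb : t ∈ Set.Ioo 0 b := ⟨ht.1, lt_of_le_of_lt ht.2 hs.2⟩
          have h1 : HasDerivAt (fun x : ℝ => x ^ c) (c * t ^ (c-1)) t :=
            Real.hasDerivAt_rpow_const (Or.inl ht.1.ne')
          have h2 : HasDerivAt (fun x : ℝ => x ^ (c-1)) ((c-1) * t ^ (c-1-1)) t :=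
            Real.hasDerivAt_rpow_const (Or.inl ht.1.ne')
          have h3 := ((h1.div_const c).const_mul M).sub (h2.mul (hDd t (hsubR htb)))
          have heq : M * (c * t ^ (c-1) / c) = M * t ^ (c-1) := by field_simp
          rw [heq] at h3
          exact h3
        · intro t ht
          show (0:ℝ) ≤ M * t ^ (c-1) - ((c-1) * t ^ (c-1-1) * D t + t ^ (c-1) * D2 t)
          have htb : t ∈ Set.Ioo 0 b := ⟨ht.1, lt_of_le_of_lt ht.2 hs.2⟩
          have hodet := hode t (hsubR htb)
          have hsub : (t:ℝ) ^ (c-1-1) = t ^ (c-1) / t := Real.rpow_sub_one ht.1.ne' _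
          have e1 : (c-1) * t ^ (c-1-1) * D t + t ^ (c-1) * D2 t =
              t ^ (c-1) * (f (φ t) + g (φ t) * |D t| ^ q) := by
            rw [hsub, ← hodet]; ring
          have hMt : f (φ t) + g (φ t) * |D t| ^ q ≤ M := hRHSmono t s htb hs ht.2
          have h5 : 0 ≤ t ^ (c-1) * (M - (f (φ t) + g (φ t) * |D t| ^ q)) :=
            mul_nonneg (Real.rpow_nonneg ht.1.le _) (by linarith)
          rw [e1]
          nlinarith [h5]
        · have t1 : Filter.Tendsto (fun ε : ℝ => ε ^ c) (nhdsWithin 0 (Set.Ioi 0))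
              (nhds 0) := by
            have hco : Filter.Tendsto (fun x : ℝ => x ^ c) (nhds 0) (nhds ((0:ℝ) ^ c)) :=
              (Real.continuousAt_rpow_const 0 c (Or.inr (by linarith))).tendsto
            rw [Real.zero_rpow (by linarith : c ≠ 0)] at hco
            exact hco.mono_left nhdsWithin_le_nhds
          have t2 : Filter.Tendsto (fun ε : ℝ => ε ^ (c-1) * D ε)
              (nhdsWithin 0 (Set.Ioi 0)) (nhds 0) := by
            apply squeeze_zero'
            · filter_upwards [Ioo_mem_nhdsGT_of_mem
                (Set.mem_Ico.2 ⟨le_refl (0:ℝ), lt_min hs.1 one_pos⟩)] with ε hε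
              exact mul_nonneg (Real.rpow_nonneg hε.1.le _)
                (hDnn ε ⟨hε.1, lt_trans (lt_of_lt_of_le hε.2 (min_le_left _ _)) hs.2⟩)
            · filter_upwards [Ioo_mem_nhdsGT_of_mem
                (Set.mem_Ico.2 ⟨le_refl (0:ℝ), lt_min hs.1 one_pos⟩)] with ε hε
              have hε1 : ε ^ (c-1) ≤ 1 := Real.rpow_le_one hε.1.le
                (le_of_lt (lt_of_lt_of_le hε.2 (min_le_right _ _))) (by linarith)
              exact mul_le_of_le_one_left
                (hDnn ε ⟨hε.1, lt_trans (lt_of_lt_of_le hε.2 (min_le_left _ _)) hs.2⟩) hε1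
            · exact hd0
          have := ((t1.div_const c).const_mul M).sub t2
          simpa using this
      have hsc : s ^ c = s ^ (c-1) * s := by
        rw [← Real.rpow_add_one hs.1.ne' (c-1)]; norm_num
      have hsp : (0:ℝ) < s ^ (c-1) := Real.rpow_pos_of_pos hs.1 _
      have h6 : s ^ (c-1) * D s ≤ s ^ (c-1) * (s * M / c) := by
        have : M * (s ^ c / c) = s ^ (c-1) * (s * M / c) := by rw [hsc]; ring
        linarith [key, this]
      exact (mul_le_mul_iff_right₀ hsp).1 h6
    intro s hs
    refine ⟨?_, hDnn s hs, hφa' s hs.1.le hs.2⟩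
    have hodes := hode s (hsubR hs)
    have htr := htrick s hs
    set M := f (φ s) + g (φ s) * |D s| ^ q with hMdef
    have h1 : (c-1)/s * D s ≤ (c-1)/s * (s * M / c) :=
      mul_le_mul_of_nonneg_left htr (div_nonneg (by linarith) hs.1.le)
    have h2 : (c-1)/s * (s * M / c) = (c-1) * M / c := by
      field_simp [hs.1.ne', hc0.ne']
    rw [h2] at h1
    have h3 : M - (c-1) * M / c = M / c := by field_simp; ring
    linarith
  -- the set where D2 is nonnegative
  set T : Set ℝ := {r : ℝ | 0 ≤ r ∧ r < R ∧ ∀ s ∈ Set.Ioc 0 r, 0 ≤ D2 s} with hTdef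
  have hT0 : (0:ℝ) ∈ T := ⟨le_refl 0, hR, fun s hs => absurd hs.2 (not_le.2 hs.1)⟩
  have hTbdd : BddAbove T := ⟨R, fun r hr => le_of_lt hr.2.1⟩
  have hTne : T.Nonempty := ⟨0, hT0⟩
  set r₀ : ℝ := sSup T with hr₀def
  have hr₀R : r₀ ≤ R := csSup_le hTne (fun r hr => le_of_lt hr.2.1)
  -- an initial interval is in T
  have hδ0 : ∃ δ, 0 < δ ∧ δ < R ∧ ∀ s ∈ Set.Ioc 0 δ, 0 ≤ D2 s := by
    have h := hL.eventually (eventually_gt_nhds hLpos)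
    rw [eventually_nhdsWithin_iff, Metric.eventually_nhds_iff] at h
    obtain ⟨ε, hε, hball⟩ := h
    refine ⟨min (ε/2) (R/2), lt_min (by linarith) (by linarith),
      lt_of_le_of_lt (min_le_right _ _) (by linarith), ?_⟩
    intro s hs
    have h1 : dist s 0 < ε := by
      rw [Real.dist_eq, sub_zero, abs_of_pos hs.1]
      exact lt_of_le_of_lt (le_trans hs.2 (min_le_left _ _)) (by linarith)
    exact le_of_lt (hball h1 hs.1)
  obtain ⟨δ, hδpos, hδR, hδD2⟩ := hδ0
  have hδT : δ ∈ T := ⟨hδpos.le, hδR, hδD2⟩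
  have hr₀pos : 0 < r₀ := lt_of_lt_of_le hδpos (le_csSup hTbdd hδT)
  have hD2nn : ∀ s ∈ Set.Ioo 0 r₀, 0 ≤ D2 s := by
    intro s hs
    obtain ⟨r, hrT, hsr⟩ := exists_lt_of_lt_csSup hTne hs.2
    exact hrT.2.2 s ⟨hs.1, hsr.le⟩
  -- r₀ = R
  have hr₀eq : r₀ = R := by
    by_contra hne
    have hlt : r₀ < R := lt_of_le_of_ne hr₀R hne
    have hr₀Ioo : r₀ ∈ Set.Ioo 0 R := ⟨hr₀pos, hlt⟩
    have hfacts := hgood r₀ hr₀pos hr₀R hD2nn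
    -- D2 is bounded below by f a / c on Ioo 0 r₀
    have hlow : ∀ s ∈ Set.Ioo 0 r₀, f a / c ≤ D2 s := by
      intro s hs
      obtain ⟨h1, h2, h3⟩ := hfacts s hs
      have h4 : f a ≤ f (φ s) := hfmono h3
      have h5 : 0 ≤ g (φ s) * |D s| ^ q :=
        mul_nonneg (le_trans hga (hgmono h3)) (Real.rpow_nonneg (abs_nonneg _) q)
      exact le_trans ((div_le_div_iff_of_pos_right hc0).2 (by linarith)) h1
    -- D2 at r₀ is positive
    have hcontr₀ : ContinuousAt D2 r₀ := hD2cont.continuousAt (hIoo.mem_nhds hr₀Ioo)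
    have hD2r₀ : f a / c ≤ D2 r₀ := by
      refine ge_of_tendsto (hcontr₀.tendsto.mono_left
        (nhdsWithin_le_nhds (s := Set.Iio r₀))) ?_
      filter_upwards [Ioo_mem_nhdsLT_of_mem (Set.mem_Ioc.2 ⟨hr₀pos, le_refl r₀⟩)]
        with s hs
      exact hlow s hs
    have hD2r₀pos : 0 < D2 r₀ := lt_of_lt_of_le (div_pos (hfpos a) hc0) hD2r₀
    -- D2 is positive in a neighborhood of r₀
    have hnbhd := hcontr₀.tendsto.eventually (eventually_gt_nhds hD2r₀pos)
    rw [Metric.eventually_nhds_iff] at hnbhd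
    obtain ⟨η, hη, hball⟩ := hnbhd
    set r' : ℝ := min (r₀ + η/2) ((r₀ + R)/2) with hr'def
    have hr'1 : r₀ < r' := lt_min (by linarith) (by linarith)
    have hr'R : r' < R := lt_of_le_of_lt (min_le_right _ _) (by linarith)
    have hr'T : r' ∈ T := by
      refine ⟨le_of_lt (lt_of_lt_of_le hr₀pos hr'1.le), hr'R, ?_⟩
      intro s hs
      rcases lt_or_ge s r₀ with h | h
      · exact hD2nn s ⟨hs.1, h⟩
      · refine le_of_lt (hball ?_)
        rw [Real.dist_eq, abs_of_nonneg (by linarith)]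
        have : s ≤ r₀ + η/2 := le_trans hs.2 (min_le_left _ _)
        linarith
    have := le_csSup hTbdd hr'T
    linarith
  have hD2nnR : ∀ s ∈ Set.Ioo 0 R, 0 ≤ D2 s := by rw [hr₀eq] at hD2nn; exact hD2nn
  have hfactsR := hgood R hR le_rfl hD2nnR
  have hfac : 0 < f a / c := div_pos (hfpos a) hc0
  -- linear lower bound for D
  have hDlin : ∀ s ∈ Set.Ioo 0 R, f a / c * s ≤ D s := by
    intro s hs
    have key : (0:ℝ) ≤ D s - f a / c * s := by
      refine my_limit_le (v := fun t => D t - f a / c * t)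
        (v' := fun t => D2 t - f a / c) hs.1 ?_ ?_
        (by simpa using hd0.sub (my_lin0 (f a / c)))
      · intro t ht
        have h1 := (hDd t ⟨ht.1, lt_of_le_of_lt ht.2 hs.2⟩).sub
          ((hasDerivAt_id t).const_mul (f a / c))
        rw [mul_one] at h1; exact h1
      · intro t ht
        show (0:ℝ) ≤ D2 t - f a / c
        have htIoo : t ∈ Set.Ioo 0 R := ⟨ht.1, lt_of_le_of_lt ht.2 hs.2⟩
        obtain ⟨h1, h2, h3⟩ := hfactsR t htIoo
        have h4 : f a ≤ f (φ t) := hfmono h3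
        have h5 : 0 ≤ g (φ t) * |D t| ^ q :=
          mul_nonneg (le_trans hga (hgmono h3)) (Real.rpow_nonneg (abs_nonneg _) q)
        have h6 : f a / c ≤ (f (φ t) + g (φ t) * |D t| ^ q) / c :=
          (div_le_div_iff_of_pos_right hc0).2 (by linarith)
        linarith
    linarith
  have hDpos : ∀ s ∈ Set.Ioo 0 R, 0 < D s := fun s hs =>
    lt_of_lt_of_le (mul_pos hfac hs.1) (hDlin s hs)
  -- φ exceeds a on (0,R)
  have hφgt : ∀ s ∈ Set.Ioo 0 R, a < φ s := by
    intro s hs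
    have hhalf : s/2 ∈ Set.Ioo 0 R := ⟨by linarith [hs.1], by linarith [hs.2]⟩
    have hmpos : 0 < f a / c * (s/2) := mul_pos hfac (by linarith [hs.1])
    have hmono := my_mono (x := s/2) (y := s) (u := fun t => φ t - f a / c * (s/2) * t)
      (u' := fun t => D t - f a / c * (s/2)) (by linarith [hs.1])
      (fun t ht => by
        have htIoo : t ∈ Set.Ioo 0 R := ⟨lt_of_lt_of_le (by linarith [hs.1]) ht.1, lt_of_le_of_lt ht.2 hs.2⟩
        exact ((hφd t htIoo).continuousAt.sub
          ((continuous_const.mul continuous_id).continuousAt)).continuousWithinAt)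
      (fun t ht => by
        have htIoo : t ∈ Set.Ioo 0 R := ⟨lt_trans (by linarith [hs.1]) ht.1, lt_trans ht.2 hs.2⟩
        have h1 := (hφd t htIoo).sub ((hasDerivAt_id t).const_mul (f a / c * (s/2)))
        rw [mul_one] at h1; exact h1)
      (fun t ht => by
        show (0:ℝ) ≤ D t - f a / c * (s/2)
        have htIoo : t ∈ Set.Ioo 0 R := ⟨lt_trans (by linarith [hs.1]) ht.1, lt_trans ht.2 hs.2⟩
        have h1 := hDlin t htIoo
        have h2 : f a / c * (s/2) ≤ f a / c * t :=
          mul_le_mul_of_nonneg_left ht.1.le hfac.le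
        linarith)
    have ha2 : a ≤ φ (s/2) := (hfactsR (s/2) hhalf).2.2
    have h3 : φ (s/2) - f a / c * (s/2) * (s/2) ≤ φ s - f a / c * (s/2) * s := hmono
    nlinarith [mul_pos hmpos (show (0:ℝ) < s/2 by linarith [hs.1])]
  -- primitives
  have hgpc : Continuous (fun t => max (g t) 0) := hg.max continuous_const
  set F : ℝ → ℝ := fun t => ∫ x in a..t, f x with hFdef
  set G : ℝ → ℝ := fun t => ∫ x in a..t, max (g x) 0 with hGdef
  have hFd : ∀ x : ℝ, HasDerivAt F (f x) x := fun x =>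
    intervalIntegral.integral_hasDerivAt_right (hf.intervalIntegrable a x)
      ⟨Set.univ, Filter.univ_mem, hf.measurable.aestronglyMeasurable⟩ hf.continuousAt
  have hGd : ∀ x : ℝ, HasDerivAt G (max (g x) 0) x := fun x =>
    intervalIntegral.integral_hasDerivAt_right (hgpc.intervalIntegrable a x)
      ⟨Set.univ, Filter.univ_mem, hgpc.measurable.aestronglyMeasurable⟩ hgpc.continuousAt
  have hFcont : Continuous F :=
    intervalIntegral.continuous_primitive (fun x y => hf.intervalIntegrable x y) a
  have hGcont : Continuous G :=
    intervalIntegral.continuous_primitive (fun x y => hgpc.intervalIntegrable x y) a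
  have hFa : F a = 0 := intervalIntegral.integral_same
  have hGa : G a = 0 := intervalIntegral.integral_same
  have hFlow : ∀ t, a ≤ t → f a * (t - a) ≤ F t := by
    intro t hat
    have h1 : ∫ x in a..t, f a ≤ ∫ x in a..t, f x :=
      intervalIntegral.integral_mono_on hat intervalIntegrable_const
        (hf.intervalIntegrable a t) (fun x hx => hfmono hx.1)
    rw [intervalIntegral.integral_const, smul_eq_mul] at h1
    calc f a * (t - a) = (t - a) * f a := mul_comm _ _
      _ ≤ F t := h1
  have hFnn : ∀ t, a ≤ t → 0 ≤ F t := fun t hat =>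
    le_trans (mul_nonneg (hfpos a).le (by linarith)) (hFlow t hat)
  have hGnn : ∀ t, a ≤ t → 0 ≤ G t := fun t hat =>
    intervalIntegral.integral_nonneg hat (fun x _ => le_max_right _ _)
  -- energy estimate 1
  have hE1 : ∀ s ∈ Set.Ioo 0 R, 2 / c * F (φ s) ≤ D s * D s := by
    intro s hs
    have key : (0:ℝ) ≤ D s * D s - 2 / c * F (φ s) := by
      refine my_limit_le (v := fun t => D t * D t - 2 / c * F (φ t))
        (v' := fun t => (D2 t * D t + D t * D2 t) - 2 / c * (f (φ t) * D t)) hs.1 ?_ ?_ ?_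
      · intro t ht
        have htIoo : t ∈ Set.Ioo 0 R := ⟨ht.1, lt_of_le_of_lt ht.2 hs.2⟩
        exact ((hDd t htIoo).mul (hDd t htIoo)).sub
          (((hFd (φ t)).comp t (hφd t htIoo)).const_mul (2/c))
      · intro t ht
        show (0:ℝ) ≤ (D2 t * D t + D t * D2 t) - 2 / c * (f (φ t) * D t)
        have htIoo : t ∈ Set.Ioo 0 R := ⟨ht.1, lt_of_le_of_lt ht.2 hs.2⟩
        obtain ⟨h1, h2, h3⟩ := hfactsR t htIoo
        have h5 : 0 ≤ g (φ t) * |D t| ^ q :=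
          mul_nonneg (le_trans hga (hgmono h3)) (Real.rpow_nonneg (abs_nonneg _) q)
        have h6 : f (φ t) / c ≤ D2 t :=
          le_trans ((div_le_div_iff_of_pos_right hc0).2 (by linarith)) h1
        have h10 : 2 / c * (f (φ t) * D t) = 2 * (D t * (f (φ t) / c)) := by ring
        nlinarith [mul_nonneg h2 (sub_nonneg.2 h6)]
      · have h7 := ((hFcont.tendsto a).comp hφ0).const_mul (2/c)
        rw [hFa, mul_zero] at h7
        simpa using (hd0.mul hd0).sub h7
    linarith
  -- energy estimate 2
  have h2q : (0:ℝ) < 2 - q := by linarith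
  have hE2 : ∀ s ∈ Set.Ioo 0 R, (2 - q) / c * G (φ s) ≤ D s ^ (2 - q) := by
    intro s hs
    have key : (0:ℝ) ≤ D s ^ (2-q) - (2-q)/c * G (φ s) := by
      refine my_limit_le (v := fun t => D t ^ (2-q) - (2-q)/c * G (φ t))
        (v' := fun t => (2-q) * D t ^ (2-q-1) * D2 t - (2-q)/c * (max (g (φ t)) 0 * D t))
        hs.1 ?_ ?_ ?_
      · intro t ht
        have htIoo : t ∈ Set.Ioo 0 R := ⟨ht.1, lt_of_le_of_lt ht.2 hs.2⟩
        have hDt : 0 < D t := hDpos t htIoo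
        have hrp : HasDerivAt (fun x : ℝ => x ^ (2-q)) ((2-q) * D t ^ (2-q-1)) (D t) :=
          Real.hasDerivAt_rpow_const (Or.inl hDt.ne')
        exact (hrp.comp t (hDd t htIoo)).sub
          (((hGd (φ t)).comp t (hφd t htIoo)).const_mul ((2-q)/c))
      · intro t ht
        show (0:ℝ) ≤ (2-q) * D t ^ (2-q-1) * D2 t - (2-q)/c * (max (g (φ t)) 0 * D t)
        have htIoo : t ∈ Set.Ioo 0 R := ⟨ht.1, lt_of_le_of_lt ht.2 hs.2⟩
        have hDt : 0 < D t := hDpos t htIoo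
        obtain ⟨h1, h2, h3⟩ := hfactsR t htIoo
        have hgge : 0 ≤ g (φ t) := le_trans hga (hgmono h3)
        rw [max_eq_left hgge]
        have hq' : g (φ t) * D t ^ q / c ≤ D2 t := by
          rw [abs_of_pos hDt] at h1
          have h7 : 0 < f (φ t) / c := div_pos (hfpos _) hc0
          rw [add_div] at h1
          linarith
        have hpow : D t ^ (2-q-1) * D t ^ q = D t := by
          rw [← Real.rpow_add hDt, show (2:ℝ)-q-1+q = 1 by ring, Real.rpow_one]
        have h8 : (2-q)/c * (g (φ t) * D t) =
            (2-q) * D t ^ (2-q-1) * (g (φ t) * D t ^ q / c) := by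
          rw [show (2-q) * D t ^ (2-q-1) * (g (φ t) * D t ^ q / c)
              = (2-q)/c * (g (φ t) * (D t ^ (2-q-1) * D t ^ q)) from by ring, hpow]
        have h9 : (2-q) * D t ^ (2-q-1) * (g (φ t) * D t ^ q / c) ≤
            (2-q) * D t ^ (2-q-1) * D2 t :=
          mul_le_mul_of_nonneg_left hq'
            (mul_nonneg (by linarith) (Real.rpow_nonneg hDt.le _))
        linarith
      · have hco : Filter.Tendsto (fun x : ℝ => x ^ (2-q)) (nhds 0) (nhds ((0:ℝ) ^ (2-q))) :=
          (Real.continuousAt_rpow_const 0 (2-q) (Or.inr h2q.le)).tendsto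
        rw [Real.zero_rpow h2q.ne'] at hco
        have h7 := ((hGcont.tendsto a).comp hφ0).const_mul ((2-q)/c)
        rw [hGa, mul_zero] at h7
        simpa using (hco.comp hd0).sub h7
    linarith
  -- combined gradient lower bound
  set K : ℝ := ((2-q)/c) ^ (1/(2-q)) with hKdef
  have hKpos : 0 < K := Real.rpow_pos_of_pos (div_pos h2q hc0) _
  have hDlow : ∀ s ∈ Set.Ioo 0 R,
      K * (F (φ s) ^ ((1:ℝ)/2) + G (φ s) ^ (1/(2-q))) ≤ 2 * D s := by
    intro s hs
    have hDt : 0 < D s := hDpos s hs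
    have haφ : a ≤ φ s := (hfactsR s hs).2.2
    have hFs : 0 ≤ F (φ s) := hFnn _ haφ
    have hGs : 0 ≤ G (φ s) := hGnn _ haφ
    have p1 : K * F (φ s) ^ ((1:ℝ)/2) ≤ D s := by
      have h1 : (2/c * F (φ s)) ^ ((1:ℝ)/2) ≤ (D s * D s) ^ ((1:ℝ)/2) :=
        Real.rpow_le_rpow (by positivity) (hE1 s hs) (by norm_num)
      have h2 : (D s * D s) ^ ((1:ℝ)/2) = D s := by
        rw [show D s * D s = D s ^ (2:ℝ) from by
            rw [show (2:ℝ) = ((2:ℕ):ℝ) by norm_num, Real.rpow_natCast]; ring,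
          ← Real.rpow_mul hDt.le, show (2:ℝ) * (1/2) = 1 by norm_num, Real.rpow_one]
      have h3 : (2/c * F (φ s)) ^ ((1:ℝ)/2) = (2/c) ^ ((1:ℝ)/2) * F (φ s) ^ ((1:ℝ)/2) :=
        Real.mul_rpow (by positivity) hFs
      have h4 : K ≤ (2/c) ^ ((1:ℝ)/2) := my_numeric hc hq0 hq2
      have h5 : K * F (φ s) ^ ((1:ℝ)/2) ≤ (2/c) ^ ((1:ℝ)/2) * F (φ s) ^ ((1:ℝ)/2) :=
        mul_le_mul_of_nonneg_right h4 (Real.rpow_nonneg hFs _)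
      rw [h2, h3] at h1
      linarith
    have p2 : K * G (φ s) ^ (1/(2-q)) ≤ D s := by
      have h1 : ((2-q)/c * G (φ s)) ^ (1/(2-q)) ≤ (D s ^ (2-q)) ^ (1/(2-q)) :=
        Real.rpow_le_rpow (by positivity) (hE2 s hs) (by positivity)
      have h2 : (D s ^ (2-q)) ^ (1/(2-q)) = D s := by
        rw [← Real.rpow_mul hDt.le, mul_one_div, div_self h2q.ne', Real.rpow_one]
      have h3 : ((2-q)/c * G (φ s)) ^ (1/(2-q)) = K * G (φ s) ^ (1/(2-q)) :=
        Real.mul_rpow (by positivity) hGs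
      rw [h2, h3] at h1
      exact h1
    linarith
  -- final integration
  intro r hr
  rcases eq_or_lt_of_le hr.1 with h0 | hrpos
  · rw [← h0, hφa, intervalIntegral.integral_same, mul_zero]
  · have hrIoo : r ∈ Set.Ioo 0 R := ⟨hrpos, hr.2⟩
    have hden_cont : Continuous (fun t => F t ^ ((1:ℝ)/2) + G t ^ (1/(2-q))) :=
      (hFcont.rpow_const (fun x => Or.inr (by norm_num))).add
        (hGcont.rpow_const (fun x => Or.inr (by positivity)))
    have hden_pos : ∀ t, a < t → 0 < F t ^ ((1:ℝ)/2) + G t ^ (1/(2-q)) := by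
      intro t hat
      have h1 : 0 < F t := lt_of_lt_of_le (by nlinarith [hfpos a]) (hFlow t hat.le)
      have h2 := Real.rpow_pos_of_pos h1 ((1:ℝ)/2)
      have h3 := Real.rpow_nonneg (hGnn t hat.le) (1/(2-q))
      linarith
    set hfun : ℝ → ℝ := fun t => 1 / (F t ^ ((1:ℝ)/2) + G t ^ (1/(2-q))) with hhdef
    have hfun_meas : Measurable hfun := measurable_const.div hden_cont.measurable
    have hfun_nn : ∀ t, a ≤ t → 0 ≤ hfun t := by
      intro t hat
      apply div_nonneg zero_le_one
      have h2 := Real.rpow_nonneg (hFnn t hat) ((1:ℝ)/2)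
      have h3 := Real.rpow_nonneg (hGnn t hat) (1/(2-q))
      linarith
    have hint : ∀ x, a ≤ x → IntervalIntegrable hfun volume a x := by
      intro x hax
      have hbase : IntervalIntegrable (fun t : ℝ => t ^ (-((1:ℝ)/2))) volume 0 (x - a) :=
        intervalIntegral.intervalIntegrable_rpow' (by norm_num)
      have hshift := hbase.comp_sub_right a
      simp only [zero_add, sub_add_cancel] at hshift
      have hw := hshift.const_mul ((f a) ^ (-((1:ℝ)/2)))
      refine hw.mono_fun' hfun_meas.aestronglyMeasurable ?_
      rw [Set.uIoc_of_le hax]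
      refine ((MeasureTheory.ae_restrict_iff' measurableSet_Ioc).2 (Filter.Eventually.of_forall ?_))
      intro t ht
      have hta : 0 < t - a := by linarith [ht.1]
      have hFt : f a * (t-a) ≤ F t := hFlow t (by linarith [ht.1])
      have h1 : (f a * (t-a)) ^ ((1:ℝ)/2) ≤ F t ^ ((1:ℝ)/2) :=
        Real.rpow_le_rpow (mul_nonneg (hfpos a).le hta.le) hFt (by norm_num)
      have h2 : (f a * (t-a)) ^ ((1:ℝ)/2) = (f a) ^ ((1:ℝ)/2) * (t-a) ^ ((1:ℝ)/2) :=
        Real.mul_rpow (hfpos a).le hta.le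
      have h3 : hfun t ≤ 1 / (f a * (t-a)) ^ ((1:ℝ)/2) := by
        apply one_div_le_one_div_of_le (Real.rpow_pos_of_pos (mul_pos (hfpos a) hta) _)
        have h4 := Real.rpow_nonneg (hGnn t (by linarith [ht.1])) (1/(2-q))
        linarith
      have h5 : 1 / (f a * (t-a)) ^ ((1:ℝ)/2) =
          (f a) ^ (-((1:ℝ)/2)) * (t-a) ^ (-((1:ℝ)/2)) := by
        rw [Real.mul_rpow (hfpos a).le hta.le, Real.rpow_neg (hfpos a).le,
          Real.rpow_neg hta.le, one_div, mul_inv]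
      show ‖hfun t‖ ≤ f a ^ (-((1:ℝ)/2)) * (t - a) ^ (-((1:ℝ)/2))
      rw [Real.norm_eq_abs, abs_of_nonneg (hfun_nn t (by linarith [ht.1]))]
      linarith
    set Hfun : ℝ → ℝ := fun x => ∫ t in a..x, hfun t with hHdef
    have hHd : ∀ x, a < x → HasDerivAt Hfun (hfun x) x := fun x hax =>
      intervalIntegral.integral_hasDerivAt_right (hint x hax.le)
        ⟨Set.univ, Filter.univ_mem, hfun_meas.aestronglyMeasurable⟩
        (ContinuousAt.div continuousAt_const hden_cont.continuousAt
          (ne_of_gt (hden_pos x hax)))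
    have hHnn : ∀ x, a ≤ x → 0 ≤ Hfun x := fun x hax =>
      intervalIntegral.integral_nonneg hax (fun t ht => hfun_nn t ht.1)
    have hstep : ∀ ε ∈ Set.Ioo 0 r, K/2 * (r - ε) ≤ Hfun (φ r) := by
      intro ε hε
      have hsubr : Set.Icc ε r ⊆ Set.Ioo 0 R :=
        fun t ht => ⟨lt_of_lt_of_le hε.1 ht.1, lt_of_le_of_lt ht.2 hr.2⟩
      have h1 := my_mono (x := ε) (y := r) (u := fun t => Hfun (φ t) - K/2 * t)
        (u' := fun t => hfun (φ t) * D t - K/2) hε.2.le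
        (fun t ht => by
          have htIoo := hsubr ht
          exact (((hHd (φ t) (hφgt t htIoo)).comp t
            (hφd t htIoo)).continuousAt.sub
            ((continuous_const.mul continuous_id).continuousAt)).continuousWithinAt)
        (fun t ht => by
          have htIoo := hsubr (Set.Ioo_subset_Icc_self ht)
          have h2 := ((hHd (φ t) (hφgt t htIoo)).comp t (hφd t htIoo)).sub
            ((hasDerivAt_id t).const_mul (K/2))
          rw [mul_one] at h2; exact h2)
        (fun t ht => by
          show (0:ℝ) ≤ hfun (φ t) * D t - K/2
          have htIoo := hsubr (Set.Ioo_subset_Icc_self ht)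
          have hd := hden_pos (φ t) (hφgt t htIoo)
          have h2 := hDlow t htIoo
          have h3 : hfun (φ t) * D t =
              D t / (F (φ t) ^ ((1:ℝ)/2) + G (φ t) ^ (1/(2-q))) := by
            rw [hhdef]; ring
          rw [h3]
          rw [sub_nonneg, le_div_iff₀ hd]
          linarith)
      have ha2 : a ≤ φ ε := (hfactsR ε ⟨hε.1, lt_trans hε.2 hr.2⟩).2.2
      have h4 : 0 ≤ Hfun (φ ε) := hHnn _ ha2
      have h5 : Hfun (φ ε) - K/2 * ε ≤ Hfun (φ r) - K/2 * r := h1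
      linarith
    have hfin : K/2 * r ≤ Hfun (φ r) := by
      have hlim : Filter.Tendsto (fun ε : ℝ => K/2 * (r - ε)) (nhdsWithin 0 (Set.Ioi 0))
          (nhds (K/2 * r)) := by
        have h6 : Filter.Tendsto (fun ε : ℝ => K/2 * (r - ε)) (nhds 0)
            (nhds (K/2 * (r - 0))) :=
          (continuous_const.mul (continuous_const.sub continuous_id)).tendsto 0
        rw [sub_zero] at h6
        exact h6.mono_left nhdsWithin_le_nhds
      refine le_of_tendsto hlim ?_
      filter_upwards [Ioo_mem_nhdsGT_of_mem (Set.mem_Ico.2 ⟨le_refl (0:ℝ), hrpos⟩)]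
        with ε hε
      exact hstep ε hε
    have hK2 : (c/(2-q)) ^ (1/(2-q)) = K⁻¹ := by
      rw [hKdef, show c/(2-q) = ((2-q)/c)⁻¹ by rw [inv_div],
        ← Real.inv_rpow (div_pos h2q hc0).le]
    have h6 : r * K ≤ 2 * Hfun (φ r) := by linarith
    have h7 := mul_le_mul_of_nonneg_right h6 (le_of_lt (inv_pos.2 hKpos))
    rw [mul_assoc, mul_inv_cancel₀ hKpos.ne', mul_one] at h7
    calc r ≤ 2 * Hfun (φ r) * K⁻¹ := h7
      _ = 2 * (c/(2-q)) ^ (1/(2-q)) * Hfun (φ r) := by rw [hK2]; ring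
end

section
/- Let f, h : ℝ → ℝ be continuous with f positive nondecreasing and h nonnegative nonincreasing. Define ψ_a(t) = ∫_a^t exp(-2∫_s^t h(r) dr) f(s) ds for t ≥ a. Then ψ_a is strictly increasing in t on [a, ∞), and more precisely ψ_a'(t) = f(t) - 2h(t)ψ_a(t) > 0 for all t > a. -/
open Real MeasureTheory Set Filter

theorem stmt12 (f h : ℝ → ℝ)
    (hf : Continuous f) (hfpos : ∀ t, 0 < f t) (hfmono : Monotone f)
    (hh : Continuous h) (hhnonneg : ∀ t, 0 ≤ h t) (hhanti : Antitone h)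
    (a : ℝ)
    (ψ : ℝ → ℝ)
    (hψ : ∀ t, ψ t = ∫ s in a..t, Real.exp (-2 * ∫ r in s..t, h r) * f s) :
    StrictMonoOn ψ (Set.Ici a) ∧
    ∀ t, a < t → HasDerivAt ψ (f t - 2 * h t * ψ t) t ∧ 0 < f t - 2 * h t * ψ t := by
  set H : ℝ → ℝ := fun t => ∫ r in a..t, h r with hHdef
  have hHint : ∀ x y : ℝ, IntervalIntegrable h volume x y := fun x y =>
    hh.intervalIntegrable x y
  have hHderiv : ∀ t, HasDerivAt H (h t) t := fun t =>
    intervalIntegral.integral_hasDerivAt_right (hHint a t)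
      (hh.stronglyMeasurableAtFilter _ _) hh.continuousAt
  have hHdiff : Differentiable ℝ H := fun t => (hHderiv t).differentiableAt
  have hHcont : Continuous H := hHdiff.continuous
  set g : ℝ → ℝ := fun s => Real.exp (2 * H s) * f s with hgdef
  have hgcont : Continuous g :=
    (Real.continuous_exp.comp (continuous_const.mul hHcont)).mul hf
  set φ : ℝ → ℝ := fun t => ∫ s in a..t, g s with hφdef
  have hφderiv : ∀ t, HasDerivAt φ (g t) t := fun t =>
    intervalIntegral.integral_hasDerivAt_right (hgcont.intervalIntegrable a t)
      (hgcont.stronglyMeasurableAtFilter _ _) hgcont.continuousAt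
  have hψφ : ∀ t, ψ t = Real.exp (-2 * H t) * φ t := by
    intro t
    rw [hψ, hφdef]
    simp only
    rw [← intervalIntegral.integral_const_mul]
    apply intervalIntegral.integral_congr
    intro s hs
    show Real.exp (-2 * ∫ r in s..t, h r) * f s = Real.exp (-2 * H t) * g s
    have hst : ∫ r in s..t, h r = H t - H s :=
      (intervalIntegral.integral_interval_sub_left (hHint a t) (hHint a s)).symm
    have hg0 : g s = Real.exp (2 * H s) * f s := rfl
    rw [hst, hg0, show -2 * (H t - H s) = -2 * H t + 2 * H s by ring, Real.exp_add]
    ring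
  have hexp1 : ∀ t : ℝ, Real.exp (-2 * H t) * Real.exp (2 * H t) = 1 := by
    intro t; rw [← Real.exp_add]; norm_num
  have hderiv : ∀ t, HasDerivAt ψ (f t - 2 * h t * ψ t) t := by
    intro t
    have h1 : HasDerivAt (fun u => Real.exp (-2 * H u)) (-2 * h t * Real.exp (-2 * H t)) t := by
      have := ((hHderiv t).const_mul (-2 : ℝ)).exp
      convert this using 1; ring
    have h2 : HasDerivAt (fun u => Real.exp (-2 * H u) * φ u)
        (-2 * h t * Real.exp (-2 * H t) * φ t + Real.exp (-2 * H t) * g t) t :=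
      h1.mul (hφderiv t)
    have hkey : ψ = fun u => Real.exp (-2 * H u) * φ u := funext hψφ
    rw [hkey]
    convert h2 using 1
    have hg0 : g t = Real.exp (2 * H t) * f t := rfl
    have hψt : ψ t = Real.exp (-2 * H t) * φ t := hψφ t
    have e2 : Real.exp (-2 * H t) * (Real.exp (2 * H t) * f t) = f t := by
      rw [← mul_assoc, hexp1 t, one_mul]
    simp only
    rw [e2]
    ring
  have hHa : H a = 0 := intervalIntegral.integral_same
  have hpos : ∀ t, a < t → 0 < f t - 2 * h t * ψ t := by
    intro t ht
    have hFTC : ∫ s in a..t, 2 * h s * Real.exp (2 * H s)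
        = Real.exp (2 * H t) - Real.exp (2 * H a) := by
      apply intervalIntegral.integral_eq_sub_of_hasDerivAt
      · intro s hs
        have : HasDerivAt (fun x => Real.exp (2 * H x)) (2 * h s * Real.exp (2 * H s)) s := by
          convert ((hHderiv s).const_mul (2 : ℝ)).exp using 1; ring
        exact this
      · exact ((continuous_const.mul hh).mul
          (Real.continuous_exp.comp (continuous_const.mul hHcont))).intervalIntegrable a t
    have hmono : ∫ s in a..t, 2 * h t * g s
        ≤ ∫ s in a..t, f t * (2 * h s * Real.exp (2 * H s)) := by
      apply intervalIntegral.integral_mono_on ht.le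
      · exact (continuous_const.mul hgcont).intervalIntegrable a t
      · exact (continuous_const.mul ((continuous_const.mul hh).mul
          (Real.continuous_exp.comp (continuous_const.mul hHcont)))).intervalIntegrable a t
      · intro s hs
        have h1 : h t ≤ h s := hhanti hs.2
        have h2 : f s ≤ f t := hfmono hs.2
        have he : (0:ℝ) < Real.exp (2 * H s) := Real.exp_pos _
        have hg0 : g s = Real.exp (2 * H s) * f s := rfl
        rw [hg0]
        nlinarith [mul_nonneg (mul_nonneg (sub_nonneg.2 h1) (hfpos t).le) he.le,
          mul_nonneg (mul_nonneg (hhnonneg t) (sub_nonneg.2 h2)) he.le]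
    have hmono2 : 2 * h t * φ t ≤ f t * (Real.exp (2 * H t) - 1) := by
      have h0 : 2 * h t * φ t = ∫ s in a..t, 2 * h t * g s :=
        (intervalIntegral.integral_const_mul _ _).symm
      have h1' : f t * (Real.exp (2 * H t) - 1) = ∫ s in a..t, f t * (2 * h s * Real.exp (2 * H s)) := by
        rw [intervalIntegral.integral_const_mul, hFTC, hHa, mul_zero, Real.exp_zero]
      rw [h0, h1']
      exact hmono
    have hψt : ψ t = Real.exp (-2 * H t) * φ t := hψφ t
    have he1 : (0:ℝ) < Real.exp (-2 * H t) := Real.exp_pos _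
    have e1 := hexp1 t
    have hmul := mul_le_mul_of_nonneg_left hmono2 he1.le
    rw [hψt]
    nlinarith [hfpos t]
  refine ⟨?_, fun t ht => ⟨hderiv t, hpos t ht⟩⟩
  apply strictMonoOn_of_deriv_pos (convex_Ici a)
    (fun x _ => (hderiv x).differentiableAt.continuousAt.continuousWithinAt)
  intro x hx
  rw [interior_Ici] at hx
  rw [(hderiv x).deriv]
  exact hpos x hx
end

section
/- Let f, h : ℝ → ℝ be continuous with f positive nondecreasing and h nonnegative nonincreasing, and define R(a) = ∫_a^∞ dt / (∫_a^t exp(-2∫_s^t h(r) dr) f(s) ds)^{1/2} ∈ (0, +∞]. If R(a₀) < +∞ for some a₀ ∈ ℝ, then R(a) < +∞ for every a ∈ ℝ. -/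
open Real MeasureTheory Set Filter

theorem stmt13 (f h : ℝ → ℝ)
    (hf : Continuous f) (hfpos : ∀ t, 0 < f t) (hfmono : Monotone f)
    (hh : Continuous h) (hhnonneg : ∀ t, 0 ≤ h t) (hhanti : Antitone h)
    (Rfun : ℝ → ENNReal)
    (hRfun : ∀ a, Rfun a = ∫⁻ t in Set.Ioi a,
      ENNReal.ofReal
        (1 / (∫ s in a..t, Real.exp (-2 * ∫ r in s..t, h r) * f s) ^ ((1 : ℝ) / 2)))
    (a₀ : ℝ) (hfin : Rfun a₀ < ⊤) :
    ∀ a : ℝ, Rfun a < ⊤ := by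
  intro a
  -- primitive of h
  set H : ℝ → ℝ := fun x => ∫ r in (0:ℝ)..x, h r with hHdef
  have hhint : ∀ u v : ℝ, IntervalIntegrable h volume u v :=
    fun u v => hh.intervalIntegrable u v
  have hHcont : Continuous H := intervalIntegral.continuous_primitive hhint 0
  have hHrw : ∀ s t : ℝ, (∫ r in s..t, h r) = H t - H s := by
    intro s t
    exact (intervalIntegral.integral_interval_sub_left (hhint 0 t) (hhint 0 s)).symm
  have hHmono : Monotone H := by
    intro x y hxy
    have h1 : H y - H x = ∫ r in x..y, h r := (hHrw x y).symm
    have h2 : 0 ≤ ∫ r in x..y, h r :=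
      intervalIntegral.integral_nonneg hxy (fun u _ => hhnonneg u)
    linarith
  -- the inner integrand, rewritten
  have hrwfun : ∀ t : ℝ, (fun s => Real.exp (-2 * ∫ r in s..t, h r) * f s)
      = fun s => Real.exp (-2 * (H t - H s)) * f s := by
    intro t; funext s; rw [hHrw]
  have hcont : ∀ t : ℝ, Continuous (fun s => Real.exp (-2 * ∫ r in s..t, h r) * f s) := by
    intro t
    rw [hrwfun]
    exact (Real.continuous_exp.comp (continuous_const.mul (continuous_const.sub hHcont))).mul hf
  have hII : ∀ t u v : ℝ,
      IntervalIntegrable (fun s => Real.exp (-2 * ∫ r in s..t, h r) * f s) volume u v :=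
    fun t u v => (hcont t).intervalIntegrable u v
  set ψ : ℝ → ℝ → ℝ := fun p t => ∫ s in p..t, Real.exp (-2 * ∫ r in s..t, h r) * f s
    with hψdef
  -- lower bound for ψ
  have psi_lb : ∀ p t : ℝ, p ≤ t →
      Real.exp (-2 * (H t - H p)) * (f p * (t - p)) ≤ ψ p t := by
    intro p t hpt
    have hmono : (∫ s in p..t, Real.exp (-2 * (H t - H p)) * f p)
        ≤ ψ p t := by
      apply intervalIntegral.integral_mono_on hpt intervalIntegrable_const (hII t p t)
      intro s hs
      rw [hHrw]
      have h1 : Real.exp (-2 * (H t - H p)) ≤ Real.exp (-2 * (H t - H s)) := by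
        apply Real.exp_le_exp.2
        have := hHmono hs.1
        nlinarith
      exact mul_le_mul h1 (hfmono hs.1) (hfpos p).le (Real.exp_nonneg _)
    rw [intervalIntegral.integral_const, smul_eq_mul] at hmono
    nlinarith [hmono]
  -- positivity of ψ
  have psi_pos : ∀ p t : ℝ, p < t → 0 < ψ p t := by
    intro p t hpt
    have := psi_lb p t hpt.le
    have h1 : 0 < Real.exp (-2 * (H t - H p)) * (f p * (t - p)) :=
      mul_pos (Real.exp_pos _) (mul_pos (hfpos p) (by linarith))
    linarith
  -- constant C
  set C : ℝ := max (∫ s in a₀..a, f s) 0 with hCdef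
  have hC0 : 0 ≤ C := le_max_right _ _
  -- decomposition
  have hdecomp : ∀ t : ℝ, ψ a₀ t = (∫ s in a₀..a, Real.exp (-2 * ∫ r in s..t, h r) * f s)
      + ψ a t := by
    intro t
    exact (intervalIntegral.integral_add_adjacent_intervals (hII t a₀ a) (hII t a t)).symm
  -- bound on the middle piece
  have hmid : ∀ t : ℝ, (∫ s in a₀..a, Real.exp (-2 * ∫ r in s..t, h r) * f s)
      ≤ Real.exp (-2 * (H t - H a)) * C := by
    intro t
    rcases le_or_gt a₀ a with hle | hlt
    · have h1 : (∫ s in a₀..a, Real.exp (-2 * ∫ r in s..t, h r) * f s)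
          ≤ ∫ s in a₀..a, Real.exp (-2 * (H t - H a)) * f s := by
        apply intervalIntegral.integral_mono_on hle (hII t a₀ a)
          ((intervalIntegrable_const.mul_continuousOn hf.continuousOn))
        intro s hs
        rw [hHrw]
        have h2 : Real.exp (-2 * (H t - H s)) ≤ Real.exp (-2 * (H t - H a)) := by
          apply Real.exp_le_exp.2
          have := hHmono hs.2
          nlinarith
        exact mul_le_mul_of_nonneg_right h2 (hfpos s).le
      rw [intervalIntegral.integral_const_mul] at h1
      have h3 : (∫ s in a₀..a, f s) ≤ C := le_max_left _ _
      calc (∫ s in a₀..a, Real.exp (-2 * ∫ r in s..t, h r) * f s)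
          ≤ Real.exp (-2 * (H t - H a)) * ∫ s in a₀..a, f s := h1
        _ ≤ Real.exp (-2 * (H t - H a)) * C :=
            mul_le_mul_of_nonneg_left h3 (Real.exp_nonneg _)
    · have h1 : (∫ s in a₀..a, Real.exp (-2 * ∫ r in s..t, h r) * f s)
          = -∫ s in a..a₀, Real.exp (-2 * ∫ r in s..t, h r) * f s :=
        intervalIntegral.integral_symm a a₀
      have h2 : 0 ≤ ∫ s in a..a₀, Real.exp (-2 * ∫ r in s..t, h r) * f s := by
        apply intervalIntegral.integral_nonneg hlt.le
        intro u _
        exact mul_nonneg (Real.exp_nonneg _) (hfpos u).le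
      have h3 : 0 ≤ Real.exp (-2 * (H t - H a)) * C :=
        mul_nonneg (Real.exp_nonneg _) hC0
      linarith [h1 ▸ (neg_nonpos_of_nonneg h2)]
  -- the threshold
  set T : ℝ := max a a₀ + C / f a + 1 with hTdef
  have hdiv : 0 ≤ C / f a := div_nonneg hC0 (hfpos a).le
  have hTa : a < T := by
    have := le_max_left a a₀
    simp only [hTdef]; linarith
  have hTa0 : a₀ < T := by
    have := le_max_right a a₀
    simp only [hTdef]; linarith
  -- comparison on Ioi T : ψ a₀ t ≤ 2 * ψ a t
  have hcomp : ∀ t : ℝ, T < t → ψ a₀ t ≤ 2 * ψ a t := by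
    intro t ht
    have hat : a < t := lt_trans hTa ht
    have hCle : C ≤ f a * (t - a) := by
      have h1 : C / f a < t - a := by
        have := le_max_left a a₀
        simp only [hTdef] at ht; linarith
      have := (div_lt_iff₀ (hfpos a)).1 h1
      nlinarith
    have h2 : Real.exp (-2 * (H t - H a)) * C ≤ ψ a t := by
      calc Real.exp (-2 * (H t - H a)) * C
          ≤ Real.exp (-2 * (H t - H a)) * (f a * (t - a)) :=
            mul_le_mul_of_nonneg_left hCle (Real.exp_nonneg _)
        _ ≤ ψ a t := psi_lb a t hat.le
    have h3 := hmid t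
    have h4 := hdecomp t
    linarith
  -- split the integral
  have hRψ : ∀ p : ℝ, Rfun p = ∫⁻ t in Set.Ioi p,
      ENNReal.ofReal (1 / (ψ p t) ^ ((1:ℝ)/2)) := fun p => hRfun p
  rw [hRψ a, ← Set.Ioc_union_Ioi_eq_Ioi hTa.le,
    lintegral_union measurableSet_Ioi (Set.Ioc_disjoint_Ioi le_rfl)]
  have hfirst : (∫⁻ t in Set.Ioc a T,
      ENNReal.ofReal (1 / (ψ a t) ^ ((1:ℝ)/2))) < ⊤ := by
    set c : ℝ := Real.exp (-2 * (H T - H a)) * f a with hcdef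
    have hcpos : 0 < c := mul_pos (Real.exp_pos _) (hfpos a)
    set g : ℝ → ℝ := fun t => c ^ (-(1:ℝ)/2) * (t - a) ^ (-(1:ℝ)/2) with hgdef
    have hbound : ∀ t ∈ Set.Ioc a T,
        ENNReal.ofReal (1 / (ψ a t) ^ ((1:ℝ)/2)) ≤ ENNReal.ofReal (g t) := by
      intro t ht
      apply ENNReal.ofReal_le_ofReal
      have hta : 0 < t - a := by linarith [ht.1]
      have hlb : c * (t - a) ≤ ψ a t := by
        have h1 : Real.exp (-2 * (H T - H a)) ≤ Real.exp (-2 * (H t - H a)) := by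
          apply Real.exp_le_exp.2
          have := hHmono ht.2
          nlinarith
        calc c * (t - a) = Real.exp (-2 * (H T - H a)) * (f a * (t - a)) := by ring
          _ ≤ Real.exp (-2 * (H t - H a)) * (f a * (t - a)) := by
              apply mul_le_mul_of_nonneg_right h1
              exact mul_nonneg (hfpos a).le hta.le
          _ ≤ ψ a t := psi_lb a t ht.1.le
      have hclb : 0 < c * (t - a) := mul_pos hcpos hta
      have h2 : (c * (t - a)) ^ ((1:ℝ)/2) ≤ (ψ a t) ^ ((1:ℝ)/2) :=
        Real.rpow_le_rpow hclb.le hlb (by norm_num)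
      have h3 : 0 < (c * (t - a)) ^ ((1:ℝ)/2) := Real.rpow_pos_of_pos hclb _
      have h4 : 1 / (ψ a t) ^ ((1:ℝ)/2) ≤ 1 / (c * (t - a)) ^ ((1:ℝ)/2) :=
        one_div_le_one_div_of_le h3 h2
      have h5 : 1 / (c * (t - a)) ^ ((1:ℝ)/2) = g t := by
        simp only [hgdef]
        rw [Real.mul_rpow hcpos.le hta.le,
          show (-(1:ℝ)/2) = -((1:ℝ)/2) by norm_num,
          Real.rpow_neg hcpos.le, Real.rpow_neg hta.le]
        field_simp
      linarith [h5 ▸ h4]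
    calc (∫⁻ t in Set.Ioc a T, ENNReal.ofReal (1 / (ψ a t) ^ ((1:ℝ)/2)))
        ≤ ∫⁻ t in Set.Ioc a T, ENNReal.ofReal (g t) :=
          setLIntegral_mono' measurableSet_Ioc hbound
      _ < ⊤ := by
          apply MeasureTheory.Integrable.lintegral_lt_top
          have hint1 : IntervalIntegrable (fun x : ℝ => x ^ (-(1:ℝ)/2)) volume (a - a) (T - a) :=
            intervalIntegral.intervalIntegrable_rpow' (by norm_num)
          have hint2 : IntervalIntegrable (fun x : ℝ => (x - a) ^ (-(1:ℝ)/2)) volume a T := by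
            have := hint1.comp_sub_right a
            simpa using this
          have hint3 : IntervalIntegrable g volume a T := by
            rw [hgdef]
            exact hint2.const_mul _
          exact (intervalIntegrable_iff_integrableOn_Ioc_of_le hTa.le).1 hint3
  have hsecond : (∫⁻ t in Set.Ioi T,
      ENNReal.ofReal (1 / (ψ a t) ^ ((1:ℝ)/2))) < ⊤ := by
    have hbound : ∀ t ∈ Set.Ioi T,
        ENNReal.ofReal (1 / (ψ a t) ^ ((1:ℝ)/2))
          ≤ ENNReal.ofReal (Real.sqrt 2 * (1 / (ψ a₀ t) ^ ((1:ℝ)/2))) := by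
      intro t ht
      simp only [Set.mem_Ioi] at ht
      apply ENNReal.ofReal_le_ofReal
      have h0t : a₀ < t := lt_trans hTa0 ht
      have hat : a < t := lt_trans hTa ht
      have hp0 : 0 < ψ a₀ t := psi_pos a₀ t h0t
      have hpa : 0 < ψ a t := psi_pos a t hat
      have hle : ψ a₀ t ≤ 2 * ψ a t := hcomp t ht
      have h1 : (ψ a₀ t) ^ ((1:ℝ)/2) ≤ (2 * ψ a t) ^ ((1:ℝ)/2) :=
        Real.rpow_le_rpow hp0.le hle (by norm_num)
      have h2 : (2 * ψ a t) ^ ((1:ℝ)/2)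
          = Real.sqrt 2 * (ψ a t) ^ ((1:ℝ)/2) := by
        rw [Real.mul_rpow (by norm_num) hpa.le, Real.sqrt_eq_rpow]
      have hrp0 : 0 < (ψ a₀ t) ^ ((1:ℝ)/2) := Real.rpow_pos_of_pos hp0 _
      have hrpa : 0 < (ψ a t) ^ ((1:ℝ)/2) := Real.rpow_pos_of_pos hpa _
      have h3 : (ψ a₀ t) ^ ((1:ℝ)/2) ≤ Real.sqrt 2 * (ψ a t) ^ ((1:ℝ)/2) := h2 ▸ h1
      calc 1 / (ψ a t) ^ ((1:ℝ)/2) ≤ Real.sqrt 2 / (ψ a₀ t) ^ ((1:ℝ)/2) := by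
            rw [div_le_div_iff₀ hrpa hrp0]; nlinarith
        _ = Real.sqrt 2 * (1 / (ψ a₀ t) ^ ((1:ℝ)/2)) := by rw [mul_one_div]
    calc (∫⁻ t in Set.Ioi T, ENNReal.ofReal (1 / (ψ a t) ^ ((1:ℝ)/2)))
        ≤ ∫⁻ t in Set.Ioi T,
            ENNReal.ofReal (Real.sqrt 2 * (1 / (ψ a₀ t) ^ ((1:ℝ)/2))) :=
          setLIntegral_mono' measurableSet_Ioi hbound
      _ = ENNReal.ofReal (Real.sqrt 2)
            * ∫⁻ t in Set.Ioi T, ENNReal.ofReal (1 / (ψ a₀ t) ^ ((1:ℝ)/2)) := by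
          simp_rw [ENNReal.ofReal_mul (Real.sqrt_nonneg 2)]
          rw [lintegral_const_mul' _ _ ENNReal.ofReal_ne_top]
      _ ≤ ENNReal.ofReal (Real.sqrt 2)
            * ∫⁻ t in Set.Ioi a₀, ENNReal.ofReal (1 / (ψ a₀ t) ^ ((1:ℝ)/2)) := by
          exact mul_le_mul_right (lintegral_mono_set (Set.Ioi_subset_Ioi hTa0.le)) _
      _ = ENNReal.ofReal (Real.sqrt 2) * Rfun a₀ := by rw [hRψ a₀]
      _ < ⊤ := ENNReal.mul_lt_top ENNReal.ofReal_lt_top hfin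
  exact ENNReal.add_lt_top.2 ⟨hfirst, hsecond⟩
end

section
/- Let f, h : ℝ → ℝ be continuous with f positive nondecreasing and h nonnegative nonincreasing, and define R(a) = ∫_a^∞ dt / (∫_a^t exp(-2∫_s^t h(r) dr) f(s) ds)^{1/2}. If R(a) < +∞ for every a, then R is nonincreasing in a and lim_{a→+∞} R(a) = 0. -/
open Real MeasureTheory Set Filter

noncomputable def auxG (h : ℝ → ℝ) (t : ℝ) : ℝ := ∫ r in (0:ℝ)..t, h r

noncomputable def auxF (f h : ℝ → ℝ) (a t : ℝ) : ℝ :=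
  ∫ s in a..t, Real.exp (2 * auxG h s - 2 * auxG h t) * f s

section aux

variable {f h : ℝ → ℝ}

lemma auxG_cont (hh : Continuous h) : Continuous (auxG h) :=
  intervalIntegral.continuous_primitive (fun a b => hh.intervalIntegrable a b) 0

lemma auxG_diff (hh : Continuous h) (s t : ℝ) :
    (∫ r in s..t, h r) = auxG h t - auxG h s := by
  have := intervalIntegral.integral_add_adjacent_intervals (μ := volume)
    (hh.intervalIntegrable 0 s) (hh.intervalIntegrable s t)
  unfold auxG
  linarith [this]

lemma auxG_mono (hh : Continuous h) (hpos : ∀ r, 0 ≤ h r) : Monotone (auxG h) := by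
  intro s t hst
  have h1 : (0:ℝ) ≤ ∫ r in s..t, h r :=
    intervalIntegral.integral_nonneg hst (fun u _ => hpos u)
  have h2 := auxG_diff hh s t
  linarith

lemma auxF_integrand_cont (hf : Continuous f) (hh : Continuous h) (t : ℝ) :
    Continuous fun s => Real.exp (2 * auxG h s - 2 * auxG h t) * f s :=
  (Real.continuous_exp.comp
    ((continuous_const.mul (auxG_cont hh)).sub continuous_const)).mul hf

lemma auxF_eq (a t : ℝ) : auxF f h a t
    = Real.exp (-(2 * auxG h t)) * ∫ s in a..t, Real.exp (2 * auxG h s) * f s := by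
  unfold auxF
  rw [← intervalIntegral.integral_const_mul]
  apply intervalIntegral.integral_congr
  intro s _
  show Real.exp (2 * auxG h s - 2 * auxG h t) * f s
      = Real.exp (-(2 * auxG h t)) * (Real.exp (2 * auxG h s) * f s)
  rw [← mul_assoc, ← Real.exp_add]
  ring_nf

lemma auxF_cont (hf : Continuous f) (hh : Continuous h) (a : ℝ) :
    Continuous fun t => auxF f h a t := by
  have hG := auxG_cont hh
  have hcont : Continuous fun s => Real.exp (2 * auxG h s) * f s :=
    (Real.continuous_exp.comp (continuous_const.mul hG)).mul hf
  have hfun : (fun t => auxF f h a t) = fun t =>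
      Real.exp (-(2 * auxG h t)) * ∫ s in a..t, Real.exp (2 * auxG h s) * f s := by
    funext t; exact auxF_eq a t
  rw [hfun]
  exact (Real.continuous_exp.comp (continuous_const.mul hG).neg).mul
    (intervalIntegral.continuous_primitive (fun c d => hcont.intervalIntegrable c d) a)

lemma auxF_pos (hf : Continuous f) (hh : Continuous h) (hfpos : ∀ s, 0 < f s)
    {a t : ℝ} (hat : a < t) : 0 < auxF f h a t := by
  unfold auxF
  exact intervalIntegral.intervalIntegral_pos_of_pos_on
    ((auxF_integrand_cont hf hh t).intervalIntegrable a t)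
    (fun s _ => mul_pos (Real.exp_pos _) (hfpos s)) hat

lemma auxF_shift (hf : Continuous f) (hh : Continuous h) (hfpos : ∀ s, 0 < f s)
    (hfmono : Monotone f) (hhanti : Antitone h)
    {a t δ : ℝ} (hδ : 0 ≤ δ) (hat : a ≤ t) :
    auxF f h a t ≤ auxF f h (a + δ) (t + δ) := by
  have key : auxF f h (a+δ) (t+δ)
      = ∫ s in a..t, Real.exp (2 * auxG h (s+δ) - 2 * auxG h (t+δ)) * f (s+δ) := by
    unfold auxF
    rw [← intervalIntegral.integral_comp_add_right
      (fun s => Real.exp (2 * auxG h s - 2 * auxG h (t+δ)) * f s) δ]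
  rw [key]
  unfold auxF
  apply intervalIntegral.integral_mono_on hat
    ((auxF_integrand_cont hf hh t).intervalIntegrable a t)
    (((auxF_integrand_cont hf hh (t+δ)).comp (continuous_add_right δ)).intervalIntegrable a t)
  intro s hs
  have hst : s ≤ t := hs.2
  have hint : (∫ r in s+δ..t+δ, h r) ≤ ∫ r in s..t, h r := by
    rw [← intervalIntegral.integral_comp_add_right h δ]
    exact intervalIntegral.integral_mono_on hst
      ((hh.comp (continuous_add_right δ)).intervalIntegrable s t)
      (hh.intervalIntegrable s t)
      (fun r _ => hhanti (le_add_of_nonneg_right hδ))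
  have h1 := auxG_diff hh s t
  have h2 := auxG_diff hh (s+δ) (t+δ)
  have hGle : 2 * auxG h s - 2 * auxG h t ≤ 2 * auxG h (s+δ) - 2 * auxG h (t+δ) := by
    linarith
  exact mul_le_mul (Real.exp_le_exp.mpr hGle) (hfmono (le_add_of_nonneg_right hδ))
    (hfpos s).le (Real.exp_pos _).le

lemma auxF_lb (hf : Continuous f) (hh : Continuous h) (hfpos : ∀ s, 0 < f s)
    (hfmono : Monotone f) (hhanti : Antitone h) (hhnonneg : ∀ r, 0 ≤ h r)
    {n t : ℝ} (hn : 0 ≤ n) (ht : 0 < t) :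
    Real.exp (-(2 * h 0 * t)) * f n * t ≤ auxF f h n (t + n) := by
  have hnt : n ≤ t + n := by linarith
  have hconst : (∫ _ in n..(t+n), Real.exp (-(2 * h 0 * t)) * f n)
      = Real.exp (-(2 * h 0 * t)) * f n * t := by
    rw [intervalIntegral.integral_const]
    simp [smul_eq_mul]
    ring
  rw [← hconst]
  unfold auxF
  apply intervalIntegral.integral_mono_on hnt
    intervalIntegrable_const
    ((auxF_integrand_cont hf hh (t+n)).intervalIntegrable n (t+n))
  intro s hs
  have hint : (∫ r in s..(t+n), h r) ≤ h 0 * t := by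
    have hcomp : (∫ r in s..(t+n), h r) ≤ ∫ _ in s..(t+n), h 0 :=
      intervalIntegral.integral_mono_on hs.2 (hh.intervalIntegrable s (t+n))
        intervalIntegrable_const
        (fun r hr => hhanti (le_trans hn (le_trans hs.1 hr.1)))
    rw [intervalIntegral.integral_const, smul_eq_mul] at hcomp
    have : (t + n - s) * h 0 ≤ t * h 0 :=
      mul_le_mul_of_nonneg_right (by linarith [hs.1]) (hhnonneg 0)
    nlinarith [hcomp]
  have h1 := auxG_diff hh s (t+n)
  have hexp : Real.exp (-(2 * h 0 * t)) ≤ Real.exp (2 * auxG h s - 2 * auxG h (t+n)) := by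
    apply Real.exp_le_exp.mpr
    linarith
  exact mul_le_mul hexp (hfmono hs.1) (hfpos n).le (Real.exp_pos _).le

lemma auxF_ub (hf : Continuous f) (hh : Continuous h) (hfpos : ∀ s, 0 < f s)
    (hhnonneg : ∀ r, 0 ≤ h r) {B a t : ℝ} (hB : ∀ s, f s ≤ B) (hat : a ≤ t) :
    auxF f h a t ≤ B * (t - a) := by
  have hconst : (∫ _ in a..t, B) = B * (t - a) := by
    rw [intervalIntegral.integral_const, smul_eq_mul]; ring
  rw [← hconst]
  unfold auxF
  apply intervalIntegral.integral_mono_on hat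
    ((auxF_integrand_cont hf hh t).intervalIntegrable a t)
    intervalIntegrable_const
  intro s hs
  have hG : auxG h s ≤ auxG h t := auxG_mono hh hhnonneg hs.2
  have hexp : Real.exp (2 * auxG h s - 2 * auxG h t) ≤ 1 :=
    Real.exp_le_one_iff.mpr (by linarith)
  calc Real.exp (2 * auxG h s - 2 * auxG h t) * f s
      ≤ 1 * B := mul_le_mul hexp (hB s) (hfpos s).le zero_le_one
    _ = B := one_mul B

end aux

theorem stmt14 (f h : ℝ → ℝ)
    (hf : Continuous f) (hfpos : ∀ t, 0 < f t) (hfmono : Monotone f)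
    (hh : Continuous h) (hhnonneg : ∀ t, 0 ≤ h t) (hhanti : Antitone h)
    (Rfun : ℝ → ENNReal)
    (hRfun : ∀ a, Rfun a = ∫⁻ t in Set.Ioi a,
      ENNReal.ofReal
        (1 / (∫ s in a..t, Real.exp (-2 * ∫ r in s..t, h r) * f s) ^ ((1 : ℝ) / 2)))
    (hfin : ∀ a, Rfun a < ⊤) :
    Antitone Rfun ∧ Filter.Tendsto Rfun Filter.atTop (nhds 0) := by
  -- rewrite Rfun via auxF
  have horig : ∀ a t : ℝ, (∫ s in a..t, Real.exp (-2 * ∫ r in s..t, h r) * f s)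
      = auxF f h a t := by
    intro a t
    unfold auxF
    apply intervalIntegral.integral_congr
    intro s _
    show Real.exp (-2 * ∫ r in s..t, h r) * f s
        = Real.exp (2 * auxG h s - 2 * auxG h t) * f s
    rw [auxG_diff hh s t,
      show -2 * (auxG h t - auxG h s) = 2 * auxG h s - 2 * auxG h t by ring]
  have hR' : ∀ a, Rfun a = ∫⁻ t in Set.Ioi a,
      ENNReal.ofReal (1 / (auxF f h a t) ^ ((1 : ℝ) / 2)) := by
    intro a
    rw [hRfun a]
    congr 1
    funext t
    rw [horig a t]
  -- translation identity
  have htrans : ∀ (c : ℝ) (gg : ℝ → ENNReal),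
      (∫⁻ t in Set.Ioi c, gg t) = ∫⁻ t in Set.Ioi (0:ℝ), gg (t + c) := by
    intro c gg
    have hmp : MeasurePreserving (fun x : ℝ => x + c) volume volume :=
      measurePreserving_add_right volume c
    have hkey := hmp.setLIntegral_comp_preimage_emb (measurableEmbedding_addRight c)
      gg (Set.Ioi c)
    rw [show (fun x : ℝ => x + c) ⁻¹' Set.Ioi c = Set.Ioi 0 by
      ext x; simp [Set.mem_Ioi]] at hkey
    exact hkey.symm
  -- Antitone
  have hAnti : Antitone Rfun := by
    intro a₁ a₂ h12
    set δ := a₂ - a₁ with hδdef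
    have hδ : 0 ≤ δ := by rw [hδdef]; linarith
    rw [hR' a₁, hR' a₂, htrans a₂ _, htrans a₁ _]
    apply lintegral_mono_ae
    filter_upwards [ae_restrict_mem measurableSet_Ioi] with t ht
    have ht0 : (0:ℝ) < t := ht
    apply ENNReal.ofReal_le_ofReal
    have hpos1 : 0 < auxF f h a₁ (t + a₁) :=
      auxF_pos hf hh hfpos (by linarith : a₁ < t + a₁)
    have hle : auxF f h a₁ (t + a₁) ≤ auxF f h a₂ (t + a₂) := by
      have hs := auxF_shift hf hh hfpos hfmono hhanti hδ
        (show a₁ ≤ t + a₁ by linarith)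
      rw [show a₁ + δ = a₂ by rw [hδdef]; ring,
        show t + a₁ + δ = t + a₂ by rw [hδdef]; ring] at hs
      exact hs
    have h2 : auxF f h a₁ (t+a₁) ^ ((1:ℝ)/2) ≤ auxF f h a₂ (t+a₂) ^ ((1:ℝ)/2) :=
      Real.rpow_le_rpow hpos1.le hle (by norm_num)
    have h3 : 0 < auxF f h a₁ (t+a₁) ^ ((1:ℝ)/2) := Real.rpow_pos_of_pos hpos1 _
    exact one_div_le_one_div_of_le h3 h2
  refine ⟨hAnti, ?_⟩
  by_cases hbdd : BddAbove (Set.range f)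
  · -- bounded case: contradiction
    exfalso
    obtain ⟨B, hB⟩ := hbdd
    have hBall : ∀ s, f s ≤ B := fun s => hB (Set.mem_range_self s)
    have hBpos : 0 < B := lt_of_lt_of_le (hfpos 0) (hBall 0)
    set t₀ : ℝ := max 1 B⁻¹ with ht₀def
    have ht₀1 : (1:ℝ) ≤ t₀ := le_max_left _ _
    have ht₀pos : (0:ℝ) < t₀ := lt_of_lt_of_le one_pos ht₀1
    have key : (∫⁻ t in Set.Ioi t₀, ENNReal.ofReal (B⁻¹ * t⁻¹)) ≤ Rfun 0 := by
      rw [hR' 0]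
      refine le_trans ?_ (lintegral_mono_set (Set.Ioi_subset_Ioi ht₀pos.le))
      apply lintegral_mono_ae
      filter_upwards [ae_restrict_mem measurableSet_Ioi] with t ht
      have htt : t₀ < t := ht
      have htpos : (0:ℝ) < t := lt_trans ht₀pos htt
      apply ENNReal.ofReal_le_ofReal
      have hFpos : 0 < auxF f h 0 t := auxF_pos hf hh hfpos htpos
      have hFub : auxF f h 0 t ≤ B * t := by
        have := auxF_ub hf hh hfpos hhnonneg hBall htpos.le
        simpa using this
      have hBt1 : (1:ℝ) ≤ B * t := by
        have hbinv : B⁻¹ ≤ t := le_trans (le_max_right 1 B⁻¹) htt.le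
        calc (1:ℝ) = B * B⁻¹ := by rw [mul_inv_cancel₀ hBpos.ne']
          _ ≤ B * t := mul_le_mul_of_nonneg_left hbinv hBpos.le
      have h1 : auxF f h 0 t ^ ((1:ℝ)/2) ≤ (B * t) ^ ((1:ℝ)/2) :=
        Real.rpow_le_rpow hFpos.le hFub (by norm_num)
      have h2 : (B * t) ^ ((1:ℝ)/2) ≤ B * t := by
        calc (B * t) ^ ((1:ℝ)/2) ≤ (B * t) ^ (1:ℝ) :=
              Real.rpow_le_rpow_of_exponent_le hBt1 (by norm_num)
          _ = B * t := Real.rpow_one _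
      have h3 : 0 < auxF f h 0 t ^ ((1:ℝ)/2) := Real.rpow_pos_of_pos hFpos _
      calc B⁻¹ * t⁻¹ = 1 / (B * t) := by
            rw [one_div, mul_inv]
        _ ≤ 1 / auxF f h 0 t ^ ((1:ℝ)/2) :=
            one_div_le_one_div_of_le h3 (le_trans h1 h2)
    have hlt : (∫⁻ t in Set.Ioi t₀, ENNReal.ofReal (B⁻¹ * t⁻¹)) < ⊤ :=
      lt_of_le_of_lt key (hfin 0)
    have hInt : IntegrableOn (fun t : ℝ => B⁻¹ * t⁻¹) (Set.Ioi t₀) := by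
      constructor
      · exact (measurable_const.mul measurable_inv).aestronglyMeasurable
      · rw [hasFiniteIntegral_iff_ofReal]
        · exact hlt
        · filter_upwards [ae_restrict_mem measurableSet_Ioi] with t ht
          have : (0:ℝ) < t := lt_trans ht₀pos ht
          positivity
    have hInt2 : IntegrableOn (fun t : ℝ => t⁻¹) (Set.Ioi t₀) := by
      have := hInt.const_mul B
      have h' : Integrable (fun x : ℝ => x⁻¹) (volume.restrict (Ioi t₀)) := by
        simpa [← mul_assoc, mul_inv_cancel₀ hBpos.ne'] using this
      exact h'
    have hInt3 : IntegrableOn (fun t : ℝ => t ^ (-1 : ℝ)) (Set.Ioi t₀) := by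
      apply hInt2.congr_fun _ measurableSet_Ioi
      intro t _
      exact (Real.rpow_neg_one t).symm
    rw [integrableOn_Ioi_rpow_iff ht₀pos] at hInt3
    linarith
  · -- unbounded case
    have hftop : Tendsto f atTop atTop := tendsto_atTop_atTop_of_monotone' hfmono hbdd
    set Fn : ℕ → ℝ → ENNReal := fun n t =>
      ENNReal.ofReal (1 / (auxF f h (n:ℝ) (t + (n:ℝ))) ^ ((1:ℝ)/2)) with hFndef
    have hrw : ∀ n : ℕ, Rfun (n:ℝ) = ∫⁻ t in Set.Ioi (0:ℝ), Fn n t := by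
      intro n
      rw [hR' (n:ℝ), htrans (n:ℝ) _]
    have hFmeas : ∀ n : ℕ, Measurable (Fn n) := by
      intro n
      apply ENNReal.measurable_ofReal.comp
      have c1 : Continuous fun t : ℝ => (auxF f h (n:ℝ) (t + (n:ℝ))) ^ ((1:ℝ)/2) :=
        Continuous.rpow_const
          ((auxF_cont hf hh (n:ℝ)).comp (continuous_add_right (n:ℝ)))
          (fun t => Or.inr (by norm_num))
      exact c1.measurable.const_div 1
    set bound : ℝ → ENNReal := fun t =>
      ENNReal.ofReal (1 / (auxF f h 0 t) ^ ((1:ℝ)/2)) with hbdef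
    have hbound : ∀ n : ℕ, Fn n ≤ᵐ[volume.restrict (Set.Ioi (0:ℝ))] bound := by
      intro n
      filter_upwards [ae_restrict_mem measurableSet_Ioi] with t ht
      have ht0 : (0:ℝ) < t := ht
      have hpos0 : 0 < auxF f h 0 t := auxF_pos hf hh hfpos ht0
      have hle : auxF f h 0 t ≤ auxF f h (n:ℝ) (t + (n:ℝ)) := by
        have hs := auxF_shift hf hh hfpos hfmono hhanti
          (Nat.cast_nonneg n : (0:ℝ) ≤ (n:ℝ)) ht0.le
        rw [zero_add] at hs
        exact hs
      apply ENNReal.ofReal_le_ofReal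
      exact one_div_le_one_div_of_le (Real.rpow_pos_of_pos hpos0 _)
        (Real.rpow_le_rpow hpos0.le hle (by norm_num))
    have hbfin : (∫⁻ t in Set.Ioi (0:ℝ), bound t) ≠ ⊤ := by
      rw [← hR' 0]
      exact (hfin 0).ne
    have hlim : ∀ᵐ t ∂(volume.restrict (Set.Ioi (0:ℝ))),
        Tendsto (fun n : ℕ => Fn n t) atTop (nhds ((fun _ : ℝ => (0:ENNReal)) t)) := by
      filter_upwards [ae_restrict_mem measurableSet_Ioi] with t ht
      have ht0 : (0:ℝ) < t := ht
      -- comparison sequence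
      set c : ℝ := Real.exp (-(2 * h 0 * t)) * t with hcdef
      have hcpos : 0 < c := mul_pos (Real.exp_pos _) ht0
      have hLtop : Tendsto (fun n : ℕ => Real.exp (-(2 * h 0 * t)) * f (n:ℝ) * t)
          atTop atTop := by
        have h1 : Tendsto (fun n : ℕ => f (n:ℝ)) atTop atTop :=
          hftop.comp tendsto_natCast_atTop_atTop
        have h2 := (h1.const_mul_atTop (Real.exp_pos (-(2 * h 0 * t)))).atTop_mul_const ht0
        exact h2
      have hbig : Tendsto (fun n : ℕ =>
          (Real.exp (-(2 * h 0 * t)) * f (n:ℝ) * t) ^ ((1:ℝ)/2)) atTop atTop :=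
        (tendsto_rpow_atTop (by norm_num : (0:ℝ) < 1/2)).comp hLtop
      have hsmall : Tendsto (fun n : ℕ =>
          ENNReal.ofReal (1 / (Real.exp (-(2 * h 0 * t)) * f (n:ℝ) * t) ^ ((1:ℝ)/2)))
          atTop (nhds 0) := by
        have : Tendsto (fun n : ℕ =>
            1 / (Real.exp (-(2 * h 0 * t)) * f (n:ℝ) * t) ^ ((1:ℝ)/2)) atTop (nhds 0) := by
          simpa [one_div, Function.comp_def] using tendsto_inv_atTop_zero.comp hbig
        have h0 : (0:ENNReal) = ENNReal.ofReal 0 := by simp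
        rw [h0]
        exact ENNReal.tendsto_ofReal this
      apply tendsto_of_tendsto_of_tendsto_of_le_of_le tendsto_const_nhds hsmall
      · intro n; exact zero_le
      · intro n
        have hlb := auxF_lb hf hh hfpos hfmono hhanti hhnonneg
          (Nat.cast_nonneg n : (0:ℝ) ≤ (n:ℝ)) ht0
        have hLpos : 0 < Real.exp (-(2 * h 0 * t)) * f (n:ℝ) * t :=
          mul_pos (mul_pos (Real.exp_pos _) (hfpos _)) ht0
        apply ENNReal.ofReal_le_ofReal
        exact one_div_le_one_div_of_le (Real.rpow_pos_of_pos hLpos _)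
          (Real.rpow_le_rpow hLpos.le hlb (by norm_num))
    have hdom := tendsto_lintegral_of_dominated_convergence
      (μ := volume.restrict (Set.Ioi (0:ℝ))) bound hFmeas hbound hbfin hlim
    simp only [lintegral_zero] at hdom
    have hseq : Tendsto (fun n : ℕ => Rfun (n:ℝ)) atTop (nhds 0) := by
      have hfun : (fun n : ℕ => Rfun (n:ℝ)) = fun n : ℕ => ∫⁻ t in Set.Ioi (0:ℝ), Fn n t :=
        funext hrw
    -- conclude
      rw [hfun]
      exact hdom
    have hlim2 : Tendsto Rfun atTop (nhds (⨅ a, Rfun a)) := tendsto_atTop_iInf hAnti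
    have hinf0 : (⨅ a, Rfun a) = 0 :=
      le_antisymm (ge_of_tendsto' hseq (fun n => iInf_le Rfun ((n:ℕ):ℝ))) zero_le
    rw [hinf0] at hlim2
    exact hlim2
end

section
/- Let 0 < q ≤ 2, let f, g : ℝ → ℝ be continuous nondecreasing with f positive and g(t) ≤ 0 for all t, and set h(t) = (g⁻(t)/f(t))^{2/q} f(t) where g⁻ = -g. Then for every a ∈ ℝ and t ≥ a: ∫_a^∞ dt / (∫_a^t e^{-2∫_s^t h(r) dr} f(s) ds)^{1/2} ≥ (1/2) ∫_a^∞ [ 1/(∫_a^t f(s) ds)^{1/2} + (g⁻(t)/f(t))^{1/q} ] dt. -/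
open Real MeasureTheory Set Filter

theorem stmt15 (q : ℝ) (hq0 : 0 < q) (hq2 : q ≤ 2)
    (f g : ℝ → ℝ)
    (hf : Continuous f) (hfpos : ∀ t, 0 < f t) (hfmono : Monotone f)
    (hg : Continuous g) (hgmono : Monotone g) (hgnonpos : ∀ t, g t ≤ 0)
    (h : ℝ → ℝ) (hh : ∀ t, h t = (max (-g t) 0 / f t) ^ (2 / q) * f t) :
    ∀ a : ℝ,
      ENNReal.ofReal (1 / 2) *
          ∫⁻ t in Set.Ioi a,
            ENNReal.ofReal
              (1 / (∫ s in a..t, f s) ^ ((1 : ℝ) / 2) +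
                (max (-g t) 0 / f t) ^ (1 / q))
        ≤ ∫⁻ t in Set.Ioi a,
            ENNReal.ofReal
              (1 / (∫ s in a..t, Real.exp (-2 * ∫ r in s..t, h r) * f s) ^ ((1 : ℝ) / 2)) := by
  intro a
  have hq2' : (0:ℝ) < 2 / q := by positivity
  have hc1 : (1:ℝ) ≤ 2 / q := by rw [le_div_iff₀ hq0]; linarith
  -- continuity of h
  have hcontH : Continuous h := by
    have : Continuous fun t => (max (-g t) 0 / f t) ^ (2 / q) * f t := by
      refine Continuous.mul ?_ hf
      refine Continuous.rpow_const ?_ fun x => Or.inr hq2'.le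
      exact (hg.neg.max continuous_const).div hf fun t => (hfpos t).ne'
    exact funext hh ▸ this
  have hhnonneg : ∀ t, 0 ≤ h t := fun t => by
    rw [hh]
    have h0 : (0:ℝ) ≤ max (-g t) 0 / f t := div_nonneg (le_max_right _ _) (hfpos t).le
    exact mul_nonneg (Real.rpow_nonneg h0 _) (hfpos t).le
  -- h is antitone
  have hhanti : Antitone h := by
    intro x y hxy
    rw [hh, hh]
    have hfx := hfpos x
    have hfy := hfpos y
    have hGy0 : (0:ℝ) ≤ max (-g y) 0 := le_max_right _ _
    have hGx0 : (0:ℝ) ≤ max (-g x) 0 := le_max_right _ _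
    have hGyx : max (-g y) 0 ≤ max (-g x) 0 :=
      max_le_max (neg_le_neg (hgmono hxy)) le_rfl
    have hrw : ∀ u : ℝ, 0 < f u →
        (max (-g u) 0 / f u) ^ (2 / q) * f u = (max (-g u) 0) ^ (2 / q) * (f u) ^ (1 - 2 / q) := by
      intro u hu
      rw [Real.div_rpow (le_max_right _ _) hu.le, Real.rpow_sub hu, Real.rpow_one]
      field_simp
    rw [hrw x hfx, hrw y hfy]
    have h1 : (max (-g y) 0) ^ (2 / q) ≤ (max (-g x) 0) ^ (2 / q) :=
      Real.rpow_le_rpow hGy0 hGyx hq2'.le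
    have h2 : (f y) ^ (1 - 2 / q) ≤ (f x) ^ (1 - 2 / q) :=
      Real.rpow_le_rpow_of_nonpos hfx (hfmono hxy) (by linarith)
    exact mul_le_mul h1 h2 (Real.rpow_nonneg hfy.le _) (Real.rpow_nonneg hGx0 _)
  -- the key pointwise inequality
  have key : ∀ t, a < t →
      1 / 2 * (1 / (∫ s in a..t, f s) ^ ((1 : ℝ) / 2) + (max (-g t) 0 / f t) ^ (1 / q))
        ≤ 1 / (∫ s in a..t, Real.exp (-2 * ∫ r in s..t, h r) * f s) ^ ((1 : ℝ) / 2) := by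
    intro t hat
    -- derivative of s ↦ ∫ r in s..t, h r
    have hder : ∀ s : ℝ, HasDerivAt (fun u => ∫ r in u..t, h r) (-h s) s := by
      intro s
      have h1 : HasDerivAt (fun u => ∫ r in t..u, h r) (h s) s :=
        intervalIntegral.integral_hasDerivAt_right (hcontH.intervalIntegrable _ _)
          (hcontH.stronglyMeasurableAtFilter _ _) hcontH.continuousAt
      have h2 := h1.neg
      simpa [intervalIntegral.integral_symm t, Pi.neg_def] using h2
    have hHcont : Continuous fun u => ∫ r in u..t, h r :=
      continuous_iff_continuousAt.mpr fun s => (hder s).continuousAt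
    have hint2 : IntervalIntegrable (fun s => Real.exp (-2 * ∫ r in s..t, h r) * f s)
        volume a t :=
      (((continuous_const.mul hHcont)).rexp.mul hf).intervalIntegrable _ _
    have hI2pos : 0 < ∫ s in a..t, Real.exp (-2 * ∫ r in s..t, h r) * f s :=
      intervalIntegral.intervalIntegral_pos_of_pos_on hint2
        (fun s _ => mul_pos (Real.exp_pos _) (hfpos s)) hat
    have hI2leI1 : (∫ s in a..t, Real.exp (-2 * ∫ r in s..t, h r) * f s) ≤ ∫ s in a..t, f s := by
      refine intervalIntegral.integral_mono_on hat.le hint2 (hf.intervalIntegrable _ _) ?_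
      intro s hs
      have hH0 : 0 ≤ ∫ r in s..t, h r :=
        intervalIntegral.integral_nonneg hs.2 fun r _ => hhnonneg r
      have hexp : Real.exp (-2 * ∫ r in s..t, h r) ≤ 1 := by
        rw [Real.exp_le_one_iff]; nlinarith
      exact mul_le_of_le_one_left (hfpos s).le hexp
    have hI1pos : 0 < ∫ s in a..t, f s := lt_of_lt_of_le hI2pos hI2leI1
    have hI2rpos : 0 < (∫ s in a..t, Real.exp (-2 * ∫ r in s..t, h r) * f s) ^ ((1:ℝ)/2) :=
      Real.rpow_pos_of_pos hI2pos _
    -- bound A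
    have hA : 1 / (∫ s in a..t, f s) ^ ((1:ℝ)/2)
        ≤ 1 / (∫ s in a..t, Real.exp (-2 * ∫ r in s..t, h r) * f s) ^ ((1:ℝ)/2) :=
      one_div_le_one_div_of_le hI2rpos (Real.rpow_le_rpow hI2pos.le hI2leI1 (by norm_num))
    -- bound B
    have hB : (max (-g t) 0 / f t) ^ (1 / q)
        ≤ 1 / (∫ s in a..t, Real.exp (-2 * ∫ r in s..t, h r) * f s) ^ ((1:ℝ)/2) := by
      by_cases hGt : max (-g t) 0 = 0
      · rw [hGt, zero_div, Real.zero_rpow (by positivity : (0:ℝ) < 1/q).ne']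
        positivity
      · have hGtpos : 0 < max (-g t) 0 := lt_of_le_of_ne (le_max_right _ _) (Ne.symm hGt)
        have hht : 0 < h t := by
          rw [hh]
          have h0 : 0 < max (-g t) 0 / f t := div_pos hGtpos (hfpos t)
          exact mul_pos (Real.rpow_pos_of_pos h0 _) (hfpos t)
        -- FTC computation
        have hFder : ∀ s : ℝ, HasDerivAt (fun u => Real.exp (-2 * ∫ r in u..t, h r) / 2)
            (Real.exp (-2 * ∫ r in s..t, h r) * h s) s := by
          intro s
          have := (((hder s).const_mul (-2)).exp).div_const 2
          refine this.congr_deriv ?_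
          ring
        have hintD : IntervalIntegrable (fun s => Real.exp (-2 * ∫ r in s..t, h r) * h s)
            volume a t :=
          (((continuous_const.mul hHcont)).rexp.mul hcontH).intervalIntegrable _ _
        have hFTC : (∫ s in a..t, Real.exp (-2 * ∫ r in s..t, h r) * h s)
            = Real.exp (-2 * ∫ r in t..t, h r) / 2 - Real.exp (-2 * ∫ r in a..t, h r) / 2 :=
          intervalIntegral.integral_eq_sub_of_hasDerivAt (fun s _ => hFder s) hintD
        have hFTC' : (∫ s in a..t, Real.exp (-2 * ∫ r in s..t, h r) * h s) ≤ 1 / 2 := by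
          rw [hFTC]
          simp only [intervalIntegral.integral_same, mul_zero, Real.exp_zero]
          have := Real.exp_pos (-2 * ∫ r in a..t, h r)
          linarith
        have hI2le : (∫ s in a..t, Real.exp (-2 * ∫ r in s..t, h r) * f s) ≤ f t / h t := by
          have step1 : (∫ s in a..t, Real.exp (-2 * ∫ r in s..t, h r) * f s)
              ≤ ∫ s in a..t, f t / h t * (Real.exp (-2 * ∫ r in s..t, h r) * h s) := by
            refine intervalIntegral.integral_mono_on hat.le hint2
              ((hintD.const_mul _)) ?_
            intro s hs
            have h1 : f s ≤ f t := hfmono hs.2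
            have h2 : h t ≤ h s := hhanti hs.2
            have h3 : f s * h t ≤ f t * h s :=
              mul_le_mul h1 h2 hht.le (hfpos t).le
            have hexp := Real.exp_pos (-2 * ∫ r in s..t, h r)
            rw [div_mul_eq_mul_div, le_div_iff₀ hht]
            nlinarith
          rw [intervalIntegral.integral_const_mul] at step1
          calc (∫ s in a..t, Real.exp (-2 * ∫ r in s..t, h r) * f s)
              ≤ f t / h t * ∫ s in a..t, Real.exp (-2 * ∫ r in s..t, h r) * h s := step1
            _ ≤ f t / h t * (1 / 2) := by
                exact mul_le_mul_of_nonneg_left hFTC' (div_pos (hfpos t) hht).le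
            _ ≤ f t / h t := by
                have : 0 < f t / h t := div_pos (hfpos t) hht
                linarith
        -- conclude bound B
        have hstep : 1 / (f t / h t) ^ ((1:ℝ)/2)
            ≤ 1 / (∫ s in a..t, Real.exp (-2 * ∫ r in s..t, h r) * f s) ^ ((1:ℝ)/2) :=
          one_div_le_one_div_of_le hI2rpos (Real.rpow_le_rpow hI2pos.le hI2le (by norm_num))
        have heq : (max (-g t) 0 / f t) ^ (1 / q) = 1 / (f t / h t) ^ ((1:ℝ)/2) := by
          rw [one_div ((f t / h t) ^ ((1:ℝ)/2)),
            ← Real.inv_rpow (div_nonneg (hfpos t).le (hhnonneg t)), inv_div]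
          have hhf : h t / f t = (max (-g t) 0 / f t) ^ (2 / q) := by
            rw [hh, mul_div_assoc, div_self (hfpos t).ne', mul_one]
          rw [hhf, ← Real.rpow_mul (div_nonneg (le_max_right _ _) (hfpos t).le)]
          congr 1
          ring
        rw [heq]
        exact hstep
    linarith
  -- conclude
  rw [← MeasureTheory.lintegral_const_mul' _ _ ENNReal.ofReal_ne_top]
  refine lintegral_mono_ae ?_
  filter_upwards [ae_restrict_mem measurableSet_Ioi] with t ht
  rw [← ENNReal.ofReal_mul (by norm_num)]
  exact ENNReal.ofReal_le_ofReal (key t ht)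
end

section
/- Let 0 < q ≤ 2, f, g continuous nondecreasing with f positive and g ≤ 0, and h(t) = (g⁻(t)/f(t))^{2/q} f(t). Then for all t ≥ a: (q/2) ∫_a^t f(s) ds ≤ (∫_a^t e^{-2∫_s^t h(r) dr} f(s) ds) · [ 1 + q (∫_a^t g⁻(s) ds)^{2/q} / (∫_a^t f(s) ds)^{2/q - 1} ]. -/
open Real MeasureTheory Set Filter

theorem stmt16 (q : ℝ) (hq0 : 0 < q) (hq2 : q ≤ 2)
    (f g : ℝ → ℝ)
    (hf : Continuous f) (hfpos : ∀ t, 0 < f t) (hfmono : Monotone f)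
    (hg : Continuous g) (hgmono : Monotone g) (hgnonpos : ∀ t, g t ≤ 0)
    (h : ℝ → ℝ) (hh : ∀ t, h t = (max (-g t) 0 / f t) ^ (2 / q) * f t)
    (a : ℝ) :
    ∀ t, a ≤ t →
      (q / 2) * ∫ s in a..t, f s ≤
        (∫ s in a..t, Real.exp (-2 * ∫ r in s..t, h r) * f s) *
          (1 + q * (∫ s in a..t, max (-g s) 0) ^ (2 / q) /
            (∫ s in a..t, f s) ^ (2 / q - 1)) := by
  intro t hat
  rcases eq_or_lt_of_le hat with rfl | hlt
  · simp
  have hp0 : (0:ℝ) < 2 / q := by positivity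
  have hp1 : (1:ℝ) ≤ 2 / q := (one_le_div hq0).2 hq2
  set p : ℝ := 2 / q with hpdef
  have hpm1 : (0:ℝ) ≤ p - 1 := by linarith
  set gm : ℝ → ℝ := fun s => max (-g s) 0 with hgmdef
  have hgmc : Continuous gm := hg.neg.max continuous_const
  have hgm0 : ∀ s, 0 ≤ gm s := fun s => le_max_right _ _
  have hgma : Antitone gm := fun s u hsu => max_le_max (neg_le_neg (hgmono hsu)) le_rfl
  -- alternative formula for h
  have hh2 : ∀ s, h s = (gm s / f s) ^ (p - 1) * gm s := by
    intro s
    have hgs : max (-g s) 0 = gm s := by rw [hgmdef]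
    rw [hh s, hgs]
    rcases eq_or_lt_of_le (hgm0 s) with h0 | h0
    · rw [← h0, zero_div, Real.zero_rpow (ne_of_gt hp0), zero_mul, mul_zero]
    · have hx : gm s / f s ≠ 0 := ne_of_gt (div_pos h0 (hfpos s))
      have e1 : (gm s / f s) ^ p = (gm s / f s) ^ (p - 1) * (gm s / f s) := by
        rw [← Real.rpow_add_one hx (p - 1)]; ring_nf
      rw [e1]
      field_simp
      exact mul_div_cancel_left₀ _ (hfpos s).ne'
  have hh0 : ∀ s, 0 ≤ h s := by
    intro s
    rw [hh2 s]
    exact mul_nonneg (Real.rpow_nonneg (div_nonneg (hgm0 s) (hfpos s).le) _) (hgm0 s)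
  have hha : Antitone h := by
    intro s u hsu
    rw [hh2 s, hh2 u]
    apply mul_le_mul _ (hgma hsu) (hgm0 u)
      (Real.rpow_nonneg (div_nonneg (hgm0 s) (hfpos s).le) _)
    exact Real.rpow_le_rpow (div_nonneg (hgm0 u) (hfpos u).le)
      (div_le_div₀ (hgm0 s) (hgma hsu) (hfpos s) (hfmono hsu)) hpm1
  have hhc : Continuous h := by
    have hcont : Continuous fun s => (max (-g s) 0 / f s) ^ (2/q) * f s :=
      ((hgmc.div hf fun s => (hfpos s).ne').rpow_const fun s => Or.inr hp0.le).mul hf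
    have : h = fun s => (max (-g s) 0 / f s) ^ (2/q) * f s := funext hh
    rw [this]; exact hcont
  -- integrability
  have hfi : ∀ x y : ℝ, IntervalIntegrable f volume x y := fun x y => hf.intervalIntegrable x y
  have hgmi : ∀ x y : ℝ, IntervalIntegrable gm volume x y := fun x y => hgmc.intervalIntegrable x y
  have hhi : ∀ x y : ℝ, IntervalIntegrable h volume x y := fun x y => hhc.intervalIntegrable x y
  -- primitives
  set F : ℝ → ℝ := fun s => ∫ r in a..s, f r with hFdef
  set Gm : ℝ → ℝ := fun s => ∫ r in a..s, gm r with hGmdef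
  set H : ℝ → ℝ := fun s => ∫ r in a..s, h r with hHdef
  have hFd : ∀ s, HasDerivAt F (f s) s := fun s =>
    intervalIntegral.integral_hasDerivAt_right (hfi a s)
      (hf.stronglyMeasurableAtFilter _ _) hf.continuousAt
  have hGmd : ∀ s, HasDerivAt Gm (gm s) s := fun s =>
    intervalIntegral.integral_hasDerivAt_right (hgmi a s)
      (hgmc.stronglyMeasurableAtFilter _ _) hgmc.continuousAt
  have hHd : ∀ s, HasDerivAt H (h s) s := fun s =>
    intervalIntegral.integral_hasDerivAt_right (hhi a s)
      (hhc.stronglyMeasurableAtFilter _ _) hhc.continuousAt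
  have hHc : Continuous H := continuous_iff_continuousAt.2 fun s => (hHd s).continuousAt
  have hEc : Continuous fun r => Real.exp (2 * H r) * f r :=
    ((continuous_const.mul hHc).rexp).mul hf
  have hEi : ∀ x y : ℝ, IntervalIntegrable (fun r => Real.exp (2 * H r) * f r) volume x y :=
    fun x y => hEc.intervalIntegrable x y
  set W : ℝ → ℝ := fun s => ∫ r in a..s, Real.exp (2 * H r) * f r with hWdef
  have hWd : ∀ s, HasDerivAt W (Real.exp (2 * H s) * f s) s := fun s =>
    intervalIntegral.integral_hasDerivAt_right (hEi a s)
      (hEc.stronglyMeasurableAtFilter _ _) hEc.continuousAt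
  set ψ : ℝ → ℝ := fun s => Real.exp (-2 * H s) * W s with hψdef
  have hexp1 : ∀ s, Real.exp (-2 * H s) * Real.exp (2 * H s) = 1 := by
    intro s; rw [← Real.exp_add]; norm_num
  have hψd : ∀ s, HasDerivAt ψ (f s - 2 * h s * ψ s) s := by
    intro s
    have h1 : HasDerivAt (fun u => Real.exp (-2 * H u)) (Real.exp (-2 * H s) * (-2 * h s)) s :=
      ((hHd s).const_mul (-2 : ℝ)).exp
    have h2 := h1.mul (hWd s)
    refine h2.congr_deriv ?_
    have hee := hexp1 s
    simp only [hψdef]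
    linear_combination (f s) * hee
  have hψc : Continuous ψ := continuous_iff_continuousAt.2 fun s => (hψd s).continuousAt
  have hW0 : ∀ s, a ≤ s → 0 ≤ W s := fun s has =>
    intervalIntegral.integral_nonneg has fun r _ =>
      mul_nonneg (Real.exp_pos _).le (hfpos r).le
  have hψ0 : ∀ s, a ≤ s → 0 ≤ ψ s := fun s has =>
    mul_nonneg (Real.exp_pos _).le (hW0 s has)
  -- Lemma A : 2 h ψ ≤ f
  have lemA : ∀ s, a ≤ s → 2 * h s * ψ s ≤ f s := by
    intro s has
    have hmono : (∫ r in a..s, 2 * h s * (Real.exp (2 * H r) * f r)) ≤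
        ∫ r in a..s, f s * (2 * h r * Real.exp (2 * H r)) := by
      apply intervalIntegral.integral_mono_on has
        ((continuous_const.mul hEc).intervalIntegrable a s)
        ((continuous_const.mul ((continuous_const.mul hhc).mul
          ((continuous_const.mul hHc).rexp))).intervalIntegrable a s)
      intro r hr
      have h1 : h s ≤ h r := hha hr.2
      have h2 : f r ≤ f s := hfmono hr.2
      have h3 : (0:ℝ) ≤ 2 * Real.exp (2 * H r) := by positivity
      have h4 : h s * f r ≤ h r * f s := by
        nlinarith [mul_nonneg (sub_nonneg.2 h1) (hfpos s).le,
          mul_nonneg (hh0 s) (sub_nonneg.2 h2)]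
      have h5 := mul_le_mul_of_nonneg_left h4 h3
      show 2 * h s * (Real.exp (2 * H r) * f r) ≤ f s * (2 * h r * Real.exp (2 * H r))
      linarith [h5]
    have hftc : (∫ r in a..s, 2 * h r * Real.exp (2 * H r)) = Real.exp (2 * H s) - 1 := by
      have : (∫ r in a..s, 2 * h r * Real.exp (2 * H r)) =
          Real.exp (2 * H s) - Real.exp (2 * H a) := by
        apply intervalIntegral.integral_eq_sub_of_hasDerivAt
        · intro r _
          have := ((hHd r).const_mul (2:ℝ)).exp
          refine this.congr_deriv ?_
          ring
        · exact ((continuous_const.mul hhc).mul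
            ((continuous_const.mul hHc).rexp)).intervalIntegrable a s
      rw [this]
      have : H a = 0 := intervalIntegral.integral_same
      rw [this]; norm_num
    rw [intervalIntegral.integral_const_mul] at hmono
    rw [intervalIntegral.integral_const_mul, hftc] at hmono
    -- hmono : 2 * h s * W s ≤ f s * (exp (2 H s) - 1)
    have hkey : Real.exp (-2 * H s) * (2 * h s * W s) ≤
        Real.exp (-2 * H s) * (f s * (Real.exp (2 * H s) - 1)) :=
      mul_le_mul_of_nonneg_left hmono (Real.exp_pos _).le
    have he := hexp1 s
    have hepos : 0 ≤ Real.exp (-2 * H s) * f s :=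
      mul_nonneg (Real.exp_pos _).le (hfpos s).le
    simp only [hψdef]
    have h6 : Real.exp (-2 * H s) * (f s * (Real.exp (2 * H s) - 1)) =
        f s - Real.exp (-2 * H s) * f s := by linear_combination (f s) * he
    linarith [hkey, h6.le, h6.ge, hepos]
  -- Lemma B : h * F^(p-1) ≤ gm * Gm^(p-1)
  have hF0 : ∀ s, a ≤ s → 0 ≤ F s := fun s has =>
    intervalIntegral.integral_nonneg has fun r _ => (hfpos r).le
  have hGm0 : ∀ s, a ≤ s → 0 ≤ Gm s := fun s has =>
    intervalIntegral.integral_nonneg has fun r _ => hgm0 r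
  have lemB : ∀ s, a ≤ s → h s * F s ^ (p-1) ≤ gm s * Gm s ^ (p-1) := by
    intro s has
    have hFG : gm s * F s ≤ f s * Gm s := by
      have h1 : (∫ r in a..s, gm s * f r) ≤ ∫ r in a..s, gm r * f s := by
        apply intervalIntegral.integral_mono_on has ((hfi a s).const_mul _)
          ((hgmi a s).mul_const _)
        intro r hr
        have := hgma hr.2
        have := hfmono hr.2
        nlinarith [hgm0 r, (hfpos r).le]
      rw [intervalIntegral.integral_const_mul, intervalIntegral.integral_mul_const] at h1
      linarith [h1]
    have hx : gm s / f s * F s ≤ Gm s := by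
      rw [div_mul_eq_mul_div, div_le_iff₀ (hfpos s)]
      nlinarith [hFG]
    calc h s * F s ^ (p-1) = gm s * ((gm s / f s * F s) ^ (p-1)) := by
          rw [hh2 s, Real.mul_rpow (div_nonneg (hgm0 s) (hfpos s).le) (hF0 s has)]; ring
      _ ≤ gm s * Gm s ^ (p-1) := by
          apply mul_le_mul_of_nonneg_left _ (hgm0 s)
          exact Real.rpow_le_rpow
            (mul_nonneg (div_nonneg (hgm0 s) (hfpos s).le) (hF0 s has)) hx hpm1
  -- the monotone function Φ
  set Φ : ℝ → ℝ := fun s => p * ψ s * F s ^ (p-1) + 2 * ψ s * Gm s ^ p - F s ^ p with hΦdef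
  have hFc : Continuous F := continuous_iff_continuousAt.2 fun s => (hFd s).continuousAt
  have hGmc2 : Continuous Gm := continuous_iff_continuousAt.2 fun s => (hGmd s).continuousAt
  have hΦc : Continuous Φ := by
    apply Continuous.sub
    · apply Continuous.add
      · exact ((continuous_const.mul hψc).mul (hFc.rpow_const fun s => Or.inr hpm1))
      · exact ((continuous_const.mul hψc).mul (hGmc2.rpow_const fun s => Or.inr hp0.le))
    · exact hFc.rpow_const fun s => Or.inr hp0.le
  have hFpos : ∀ s, a < s → 0 < F s := fun s hs =>
    intervalIntegral.intervalIntegral_pos_of_pos (hfi a s) hfpos hs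
  have hΦd : ∀ s ∈ Ioo a t, HasDerivAt Φ
      (2 * p * ψ s * (gm s * Gm s ^ (p-1) - h s * F s ^ (p-1))
        + 2 * (f s - 2 * h s * ψ s) * Gm s ^ p
        + p * (p-1) * ψ s * F s ^ (p-1-1) * f s) s := by
    intro s hs
    have hFne : F s ≠ 0 := (hFpos s hs.1).ne'
    have hFp1 : HasDerivAt (fun u => F u ^ (p-1)) (f s * (p-1) * F s ^ (p-1-1)) s :=
      (hFd s).rpow_const (Or.inl hFne)
    have hFp : HasDerivAt (fun u => F u ^ p) (f s * p * F s ^ (p-1)) s :=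
      (hFd s).rpow_const (Or.inl hFne)
    have hGp : HasDerivAt (fun u => Gm u ^ p) (gm s * p * Gm s ^ (p-1)) s :=
      (hGmd s).rpow_const (Or.inr hp1)
    have hd := ((((hψd s).const_mul p).mul hFp1).add (((hψd s).const_mul 2).mul hGp)).sub hFp
    refine hd.congr_deriv ?_
    ring
  have hΦmono : MonotoneOn Φ (Icc a t) := by
    apply monotoneOn_of_deriv_nonneg (convex_Icc a t) hΦc.continuousOn
    · intro s hs
      rw [interior_Icc] at hs
      exact (hΦd s hs).differentiableAt.differentiableWithinAt
    · intro s hs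
      rw [interior_Icc] at hs
      rw [(hΦd s hs).deriv]
      have hB := lemB s hs.1.le
      have hA := lemA s hs.1.le
      have hψs := hψ0 s hs.1.le
      have h1 : 0 ≤ 2 * p * ψ s * (gm s * Gm s ^ (p-1) - h s * F s ^ (p-1)) := by
        apply mul_nonneg (by positivity) (by linarith)
      have h2 : 0 ≤ 2 * (f s - 2 * h s * ψ s) * Gm s ^ p := by
        apply mul_nonneg (by linarith) (Real.rpow_nonneg (hGm0 s hs.1.le) _)
      have h3 : 0 ≤ p * (p-1) * ψ s * F s ^ (p-1-1) * f s := by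
        apply mul_nonneg _ (hfpos s).le
        apply mul_nonneg _ (Real.rpow_nonneg (hF0 s hs.1.le) _)
        apply mul_nonneg (by positivity) hψs
      linarith
  have hΦa : Φ a = 0 := by
    simp only [hΦdef]
    have h1 : F a = 0 := intervalIntegral.integral_same
    have h2 : Gm a = 0 := intervalIntegral.integral_same
    have h3 : W a = 0 := intervalIntegral.integral_same
    have h4 : ψ a = 0 := by simp only [hψdef]; rw [h3]; ring
    rw [h1, h2, h4, Real.zero_rpow (ne_of_gt hp0)]
    ring
  have hΦt : 0 ≤ Φ t := by
    have := hΦmono (left_mem_Icc.2 hat) (right_mem_Icc.2 hat) hat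
    rw [hΦa] at this
    exact this
  -- identify ψ t with the integral in the statement
  have hψeq : (∫ s in a..t, Real.exp (-2 * ∫ r in s..t, h r) * f s) = ψ t := by
    have e1 : ∀ s ∈ uIcc a t,
        Real.exp (-2 * ∫ r in s..t, h r) * f s =
        Real.exp (-2 * H t) * (Real.exp (2 * H s) * f s) := by
      intro s _
      have hsub : (∫ r in s..t, h r) = H t - H s :=
        (intervalIntegral.integral_interval_sub_left (hhi a t) (hhi a s)).symm
      rw [hsub, ← mul_assoc, ← Real.exp_add]
      ring_nf
    rw [intervalIntegral.integral_congr e1, intervalIntegral.integral_const_mul]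
  rw [hψeq]
  -- final algebra
  have hFt : 0 < F t := hFpos t hlt
  have hFp1pos : 0 < F t ^ (p-1) := Real.rpow_pos_of_pos hFt _
  have hrw : F t ^ p = F t * F t ^ (p-1) := by
    nth_rewrite 1 [show p = 1 + (p-1) by ring]
    rw [Real.rpow_add hFt, Real.rpow_one]
  have hqp : q * p = 2 := by
    rw [hpdef]; field_simp
  have key : F t ^ p ≤ p * ψ t * F t ^ (p-1) + 2 * ψ t * Gm t ^ p := by
    have heq : Φ t = p * ψ t * F t ^ (p-1) + 2 * ψ t * Gm t ^ p - F t ^ p := by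
      simp only [hΦdef]
    linarith [hΦt, heq.le, heq.ge]
  have hψt := hψ0 t hat
  have hGmt := hGm0 t hat
  have hGmp : 0 ≤ Gm t ^ p := Real.rpow_nonneg hGmt _
  have expand : ψ t * (1 + q * Gm t ^ p / F t ^ (p-1)) =
      (ψ t * F t ^ (p-1) + q * ψ t * Gm t ^ p) / F t ^ (p-1) := by
    field_simp
  rw [expand, le_div_iff₀ hFp1pos]
  have key2 : (q/2) * (F t ^ p) ≤ (q/2) * (p * ψ t * F t ^ (p-1) + 2 * ψ t * Gm t ^ p) :=
    mul_le_mul_of_nonneg_left key (by positivity)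
  have eq2 : (q/2) * (p * ψ t * F t ^ (p-1) + 2 * ψ t * Gm t ^ p) =
      ψ t * F t ^ (p-1) + q * ψ t * Gm t ^ p := by
    linear_combination (ψ t * F t ^ (p-1) / 2) * hqp
  have hrw' : q / 2 * F t * F t ^ (p-1) = q / 2 * (F t ^ p) := by rw [hrw]; ring
  linarith [key2, eq2, hrw']
end

section
/- Let q ∈ (0,2], let f, g : ℝ → ℝ be continuous nondecreasing with f positive and lim_{t→+∞} g(t) < 0. Then the condition ∫_0^∞ dt / (∫_0^t exp(-2∫_s^t (g⁻(τ)/f(τ))^{2/q} f(τ) dτ) f(s) ds)^{1/2} = +∞ holds if and only if ∫_0^∞ [ 1/(t f(t))^{1/2} + 1/f(t)^{1/q} ] dt = +∞. -/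
open Real MeasureTheory Set Filter

/-- `x ↦ (c/x)^p * x` is antitone on `(0,∞)` for `p ≥ 1`, `c > 0`. -/
lemma aux_anti {p c a b : ℝ} (hp : 1 ≤ p) (hc : 0 < c) (ha : 0 < a) (hab : a ≤ b) :
    (c / b) ^ p * b ≤ (c / a) ^ p * a := by
  have hb : 0 < b := lt_of_lt_of_le ha hab
  have h1 : (1 : ℝ) ≤ b / a := (one_le_div ha).2 hab
  have key : b / a ≤ (b / a) ^ p := by
    calc b / a = (b / a) ^ (1 : ℝ) := (Real.rpow_one _).symm
    _ ≤ (b / a) ^ p := Real.rpow_le_rpow_of_exponent_le h1 hp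
  have hsplit : (c / a) ^ p = (c / b) ^ p * (b / a) ^ p := by
    rw [← Real.mul_rpow (by positivity) (by positivity)]
    congr 1
    field_simp
  rw [hsplit]
  calc (c / b) ^ p * b = (c / b) ^ p * ((b / a) * a) := by
        congr 1
        field_simp
    _ ≤ (c / b) ^ p * ((b / a) ^ p * a) := by
        apply mul_le_mul_of_nonneg_left _ (by positivity)
        exact mul_le_mul_of_nonneg_right key ha.le
    _ = (c / b) ^ p * (b / a) ^ p * a := by ring

/-- base-monotonicity then aux_anti: `(c/b)^p * b ≤ (c'/a)^p * a` for `c ≤ c'`. -/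
lemma aux_anti' {p c c' a b : ℝ} (hp : 1 ≤ p) (hc : 0 < c) (hcc : c ≤ c')
    (ha : 0 < a) (hab : a ≤ b) :
    (c / b) ^ p * b ≤ (c' / a) ^ p * a := by
  refine le_trans (aux_anti hp hc ha hab) ?_
  have hb : 0 < b := lt_of_lt_of_le ha hab
  have h2 : c / a ≤ c' / a := by gcongr
  have h3 : (c / a) ^ p ≤ (c' / a) ^ p :=
    Real.rpow_le_rpow (by positivity) h2 (by linarith)
  exact mul_le_mul_of_nonneg_right h3 ha.le

lemma scale_lemma (Φ : ℝ → ENNReal) (hΦ : Measurable Φ) :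
    (∫⁻ t in Set.Ioi (0:ℝ), Φ (t/2)) = 2 * ∫⁻ u in Set.Ioi (0:ℝ), Φ u := by
  have hmap : Measure.map (fun x : ℝ => 2 * x) volume
      = ENNReal.ofReal |(2:ℝ)⁻¹| • volume :=
    Real.map_volume_mul_left (by norm_num)
  have hpre : (fun x : ℝ => 2 * x) ⁻¹' (Set.Ioi 0) = Set.Ioi 0 := by
    ext x; simp only [Set.mem_preimage, Set.mem_Ioi]
    constructor <;> intro h <;> linarith
  have hcomp : Measurable fun y : ℝ => Φ (y / 2) := hΦ.comp (measurable_id.div_const 2)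
  have hg2 : Measurable fun x : ℝ => 2 * x := by fun_prop
  have key := setLIntegral_map (measurableSet_Ioi (a := (0:ℝ))) hcomp hg2 (μ := volume)
  rw [hmap, hpre] at key
  simp only [Measure.restrict_smul, lintegral_smul_measure] at key
  have hbeta : ∀ x : ℝ, Φ (2 * x / 2) = Φ x := fun x => by
    rw [show (2:ℝ) * x / 2 = x by ring]
  simp only [hbeta] at key
  rw [← key, smul_eq_mul, ← mul_assoc]
  have htwo : (2:ENNReal) * ENNReal.ofReal |(2:ℝ)⁻¹| = 1 := by
    rw [show |(2:ℝ)⁻¹| = 2⁻¹ by norm_num,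
      ENNReal.ofReal_inv_of_pos (by norm_num : (0:ℝ) < 2)]
    norm_num
    exact ENNReal.mul_inv_cancel (by norm_num) (by norm_num)
  rw [htwo, one_mul]

set_option maxHeartbeats 2000000 in
theorem stmt17 (q : ℝ) (hq0 : 0 < q) (hq2 : q ≤ 2)
    (f g : ℝ → ℝ)
    (hf : Continuous f) (hfpos : ∀ t, 0 < f t) (hfmono : Monotone f)
    (hg : Continuous g) (hgmono : Monotone g)
    (hglim : ∃ l : ℝ, l < 0 ∧ Filter.Tendsto g Filter.atTop (nhds l)) :
    (∫⁻ t in Set.Ioi (0 : ℝ),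
        ENNReal.ofReal
          (1 / (∫ s in (0 : ℝ)..t,
              Real.exp (-2 * ∫ τ in s..t, (max (-g τ) 0 / f τ) ^ (2 / q) * f τ) * f s)
            ^ ((1 : ℝ) / 2)) = ⊤)
    ↔ (∫⁻ t in Set.Ioi (0 : ℝ),
        ENNReal.ofReal
          (1 / (t * f t) ^ ((1 : ℝ) / 2) + 1 / f t ^ (1 / q)) = ⊤) := by
  obtain ⟨l, hl, hgl⟩ := hglim
  have hgle : ∀ t, g t ≤ l := fun t => hgmono.ge_of_tendsto hgl t
  have hmax : ∀ τ : ℝ, max (-g τ) 0 = -g τ := fun τ =>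
    max_eq_left (by linarith [hgle τ])
  simp only [hmax]
  set p : ℝ := 2 / q with hp
  have hp0 : 0 < p := by positivity
  have hp1 : 1 ≤ p := (one_le_div hq0).2 hq2
  have hpq : p * ((1:ℝ)/2) = 1/q := by rw [hp]; ring
  set c : ℝ := -l with hcdef
  have hc : 0 < c := by simp only [hcdef]; linarith
  have hgc : ∀ t, c ≤ -g t := fun t => by have := hgle t; simp only [hcdef]; linarith
  set w : ℝ → ℝ := fun τ => (-g τ / f τ) ^ p * f τ with hwdef
  have hwpos : ∀ τ, 0 < w τ := fun τ => by
    have h1 : 0 < -g τ / f τ := div_pos (lt_of_lt_of_le hc (hgc τ)) (hfpos τ)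
    exact mul_pos (Real.rpow_pos_of_pos h1 p) (hfpos τ)
  have hwcont : Continuous w := by
    apply Continuous.mul _ hf
    apply Continuous.rpow_const (hg.neg.div hf fun x => (hfpos x).ne')
    exact fun x => Or.inr hp0.le
  have hwint : ∀ a b : ℝ, IntervalIntegrable w volume a b := fun a b =>
    hwcont.intervalIntegrable a b
  set F : ℝ → ℝ := fun x => ∫ τ in (0:ℝ)..x, w τ with hFdef
  have hFc : Continuous F := intervalIntegral.continuous_primitive hwint 0
  have hFst : ∀ s t : ℝ, (∫ τ in s..t, w τ) = F t - F s := fun s t =>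
    (intervalIntegral.integral_interval_sub_left (hwint 0 t) (hwint 0 s)).symm
  have hFmono : Monotone F := by
    intro a b hab
    have : 0 ≤ ∫ τ in a..b, w τ :=
      intervalIntegral.integral_nonneg hab fun τ _ => (hwpos τ).le
    rw [hFst] at this; linarith
  set D : ℝ → ℝ := fun t => ∫ s in (0:ℝ)..t, Real.exp (-2 * ∫ τ in s..t, w τ) * f s
    with hDdef
  change (∫⁻ t in Set.Ioi (0:ℝ), ENNReal.ofReal (1 / (D t) ^ ((1:ℝ)/2)) = ⊤) ↔ _
  -- continuity facts
  have hIcont : ∀ t : ℝ, Continuous fun s => ∫ τ in s..t, w τ := by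
    intro t
    have he : (fun s => ∫ τ in s..t, w τ) = fun s => F t - F s := by
      funext s; exact hFst s t
    rw [he]; exact continuous_const.sub hFc
  have hEcont : ∀ t : ℝ, Continuous fun s => Real.exp (-2 * ∫ τ in s..t, w τ) * f s :=
    fun t => ((continuous_const.mul (hIcont t)).rexp).mul hf
  have hEintOn : ∀ a b t : ℝ,
      IntervalIntegrable (fun s => Real.exp (-2 * ∫ τ in s..t, w τ) * f s) volume a b :=
    fun a b t => (hEcont t).intervalIntegrable a b
  -- upper bound 1 : D t ≤ t * f t
  have hub1 : ∀ t : ℝ, 0 < t → D t ≤ t * f t := by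
    intro t ht
    have h : D t ≤ ∫ _ in (0:ℝ)..t, f t := by
      apply intervalIntegral.integral_mono_on ht.le (hEintOn 0 t t) intervalIntegrable_const
      intro s hs
      have hI : 0 ≤ ∫ τ in s..t, w τ := by
        rw [hFst]; have := hFmono hs.2; linarith
      calc Real.exp (-2 * ∫ τ in s..t, w τ) * f s ≤ 1 * f t := by
            apply mul_le_mul _ (hfmono hs.2) (hfpos s).le zero_le_one
            rw [Real.exp_le_one_iff]; nlinarith
        _ = f t := one_mul _
    rw [intervalIntegral.integral_const] at h
    simpa [smul_eq_mul] using h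
  -- pointwise lower bound on w
  have hwlb : ∀ t τ : ℝ, τ ≤ t → (c / f t) ^ p * f t ≤ w τ :=
    fun t τ hτ => aux_anti' hp1 hc (hgc τ) (hfpos τ) (hfmono hτ)
  -- w is antitone
  have hwanti : ∀ x y : ℝ, x ≤ y → w y ≤ w x := by
    intro x y hxy
    have := aux_anti' hp1 (lt_of_lt_of_le hc (hgc y)) (neg_le_neg (hgmono hxy))
      (hfpos x) (hfmono hxy)
    exact this
  -- upper bound 2 : D t ≤ 1 / (2 * (c / f t)^p)
  have hub2 : ∀ t : ℝ, 0 < t → D t ≤ 1 / (2 * (c / f t) ^ p) := by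
    intro t ht
    set β : ℝ := (c / f t) ^ p * f t with hβdef
    have hβ : 0 < β := mul_pos (Real.rpow_pos_of_pos (div_pos hc (hfpos t)) p) (hfpos t)
    have step1 : D t ≤ ∫ s in (0:ℝ)..t,
        Real.exp (-(2*β)*t) * Real.exp ((2*β)*s) * f t := by
      apply intervalIntegral.integral_mono_on ht.le (hEintOn 0 t t)
        (Continuous.intervalIntegrable (by fun_prop) 0 t)
      intro s hs
      have hIl : β * (t - s) ≤ ∫ τ in s..t, w τ := by
        have h0 : (∫ _ in s..t, β) ≤ ∫ τ in s..t, w τ := by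
          apply intervalIntegral.integral_mono_on hs.2 intervalIntegrable_const (hwint s t)
          intro τ hτ; exact hwlb t τ hτ.2
        rw [intervalIntegral.integral_const, smul_eq_mul] at h0
        linarith [h0]
      have hexp : Real.exp (-2 * ∫ τ in s..t, w τ)
          ≤ Real.exp (-(2*β)*t) * Real.exp ((2*β)*s) := by
        rw [← Real.exp_add, Real.exp_le_exp]; nlinarith
      exact mul_le_mul hexp (hfmono hs.2) (hfpos s).le (by positivity)
    have hexpint : (∫ s in (0:ℝ)..t, Real.exp ((2*β)*s))
        = (2*β)⁻¹ * (Real.exp ((2*β)*t) - 1) := by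
      rw [intervalIntegral.integral_comp_mul_left Real.exp (by positivity : (2*β) ≠ 0)]
      rw [integral_exp]
      simp [smul_eq_mul]
    have step2 : (∫ s in (0:ℝ)..t, Real.exp (-(2*β)*t) * Real.exp ((2*β)*s) * f t)
        = Real.exp (-(2*β)*t) * ((2*β)⁻¹ * (Real.exp ((2*β)*t) - 1)) * f t := by
      rw [intervalIntegral.integral_mul_const, intervalIntegral.integral_const_mul, hexpint]
    have step3 : Real.exp (-(2*β)*t) * ((2*β)⁻¹ * (Real.exp ((2*β)*t) - 1)) * f t
        ≤ (2*β)⁻¹ * f t := by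
      have h1 : Real.exp (-(2*β)*t) * (Real.exp ((2*β)*t) - 1) = 1 - Real.exp (-(2*β)*t) := by
        rw [mul_sub, ← Real.exp_add, mul_one,
          show (-(2*β)*t) + (2*β)*t = 0 by ring, Real.exp_zero]
      have h2 : Real.exp (-(2*β)*t) * ((2*β)⁻¹ * (Real.exp ((2*β)*t) - 1))
          = (2*β)⁻¹ * (1 - Real.exp (-(2*β)*t)) := by
        rw [← h1]; ring
      rw [h2]
      have h4 : (0:ℝ) < (2*β)⁻¹ := by positivity
      have h3 : (2*β)⁻¹ * (1 - Real.exp (-(2*β)*t)) ≤ (2*β)⁻¹ := by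
        nlinarith [Real.exp_pos (-(2*β)*t)]
      exact mul_le_mul_of_nonneg_right h3 (hfpos t).le
    have hfin : (2*β)⁻¹ * f t = 1 / (2 * (c / f t) ^ p) := by
      rw [hβdef]
      have h5 : (0:ℝ) < (c / f t) ^ p := Real.rpow_pos_of_pos (div_pos hc (hfpos t)) p
      field_simp
      ring
      exact mul_inv_cancel₀ (hfpos t).ne'
    calc D t ≤ _ := step1
      _ = _ := step2
      _ ≤ (2*β)⁻¹ * f t := step3
      _ = _ := hfin
  -- lower bound on D
  have hDsplit : ∀ t u : ℝ,
      D t = (∫ s in (0:ℝ)..u, Real.exp (-2 * ∫ τ in s..t, w τ) * f s)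
        + ∫ s in u..t, Real.exp (-2 * ∫ τ in s..t, w τ) * f s := fun t u =>
    (intervalIntegral.integral_add_adjacent_intervals (hEintOn 0 u t) (hEintOn u t t)).symm
  have hDtail : ∀ t u : ℝ, 0 ≤ u →
      (∫ s in u..t, Real.exp (-2 * ∫ τ in s..t, w τ) * f s) ≤ D t := by
    intro t u hu
    rw [hDsplit t u]
    have h0 : 0 ≤ ∫ s in (0:ℝ)..u, Real.exp (-2 * ∫ τ in s..t, w τ) * f s :=
      intervalIntegral.integral_nonneg hu fun s _ =>
        (mul_pos (Real.exp_pos _) (hfpos s)).le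
    linarith
  have hlb : ∀ t : ℝ, 0 < t →
      Real.exp (-2) * min ((t/2) * f (t/2)) ((f (t/2) / (-g 0)) ^ p) ≤ D t := by
    intro t ht
    have hu : 0 < t/2 := by positivity
    have hut : t/2 ≤ t := by linarith
    have key : ∀ s₀ : ℝ, t/2 ≤ s₀ → s₀ ≤ t → F t - F s₀ ≤ 1 →
        Real.exp (-2) * ((t - s₀) * f (t/2)) ≤ D t := by
      intro s₀ h1 h2 h3
      refine le_trans ?_ (hDtail t s₀ (by linarith))
      have h5 : (∫ _ in s₀..t, Real.exp (-2) * f (t/2))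
          ≤ ∫ s in s₀..t, Real.exp (-2 * ∫ τ in s..t, w τ) * f s := by
        apply intervalIntegral.integral_mono_on h2 intervalIntegrable_const (hEintOn s₀ t t)
        intro s hs
        have hFs : F s₀ ≤ F s := hFmono hs.1
        have hI : (∫ τ in s..t, w τ) ≤ 1 := by rw [hFst]; linarith
        apply mul_le_mul _ (hfmono (le_trans h1 hs.1)) (hfpos (t/2)).le (Real.exp_pos _).le
        rw [Real.exp_le_exp]; nlinarith
      rw [intervalIntegral.integral_const, smul_eq_mul] at h5
      calc Real.exp (-2) * ((t - s₀) * f (t/2)) = (t - s₀) * (Real.exp (-2) * f (t/2)) := by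
            ring
        _ ≤ _ := h5
    by_cases hcase : F t - F (t/2) ≤ 1
    · have hk := key (t/2) le_rfl hut hcase
      refine le_trans ?_ hk
      have h6 : min ((t/2) * f (t/2)) ((f (t/2) / (-g 0)) ^ p) ≤ (t - t/2) * f (t/2) := by
        refine le_trans (min_le_left _ _) (le_of_eq ?_)
        ring_nf
      exact mul_le_mul_of_nonneg_left h6 (Real.exp_pos _).le
    · push_neg at hcase
      have hmem : F t - 1 ∈ Icc (F (t/2)) (F t) := ⟨by linarith, by linarith⟩
      obtain ⟨s₀, hs₀, hFs₀⟩ := intermediate_value_Icc hut hFc.continuousOn hmem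
      have h3 : F t - F s₀ = 1 := by rw [hFs₀]; ring
      have hk := key s₀ hs₀.1 hs₀.2 (le_of_eq h3)
      have hwu : 0 < w (t/2) := hwpos (t/2)
      have h4 : 1 ≤ (t - s₀) * w (t/2) := by
        have h7 : (∫ τ in s₀..t, w τ) ≤ ∫ _ in s₀..t, w (t/2) := by
          apply intervalIntegral.integral_mono_on hs₀.2 (hwint s₀ t) intervalIntegrable_const
          intro τ hτ; exact hwanti (t/2) τ (le_trans hs₀.1 hτ.1)
        rw [hFst, h3, intervalIntegral.integral_const, smul_eq_mul] at h7
        exact h7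
      have h5 : (w (t/2))⁻¹ ≤ t - s₀ := by
        rw [inv_eq_one_div, div_le_iff₀ hwu]
        linarith [h4]
      -- f u / w u ≥ (f u / (-g 0))^p
      have hG0 : 0 < -g 0 := lt_of_lt_of_le hc (hgc 0)
      have h6 : (f (t/2) / (-g 0)) ^ p ≤ f (t/2) * (w (t/2))⁻¹ := by
        have h8 : w (t/2) ≤ (-g 0 / f (t/2)) ^ p * f (t/2) := by
          have h9 : -g (t/2) / f (t/2) ≤ -g 0 / f (t/2) := by
            gcongr
            · exact (hfpos _).le
            · exact hgmono hu.le
          have h10 : (-g (t/2) / f (t/2)) ^ p ≤ (-g 0 / f (t/2)) ^ p :=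
            Real.rpow_le_rpow (div_pos (lt_of_lt_of_le hc (hgc _)) (hfpos _)).le h9 hp0.le
          exact mul_le_mul_of_nonneg_right h10 (hfpos _).le
        have h11 : 0 < (-g 0 / f (t/2)) ^ p :=
          Real.rpow_pos_of_pos (div_pos hG0 (hfpos _)) p
        have h12 : f (t/2) * ((-g 0 / f (t/2)) ^ p * f (t/2))⁻¹ ≤ f (t/2) * (w (t/2))⁻¹ := by
          apply mul_le_mul_of_nonneg_left _ (hfpos _).le
          exact inv_anti₀ (hwpos _) h8
        refine le_trans (le_of_eq ?_) h12
        have heq : (f (t/2) / (-g 0)) ^ p = ((-g 0 / f (t/2)) ^ p)⁻¹ := by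
          rw [← Real.inv_rpow (div_pos hG0 (hfpos _)).le, inv_div]
        have heq2 : f (t/2) * ((-g 0 / f (t/2)) ^ p * f (t/2))⁻¹
            = ((-g 0 / f (t/2)) ^ p)⁻¹ := by
          rw [mul_inv]
          field_simp
          rw [div_mul_eq_div_div, div_self (hfpos _).ne']
        rw [heq, heq2]
      refine le_trans ?_ hk
      have h13 : min ((t/2) * f (t/2)) ((f (t/2) / (-g 0)) ^ p) ≤ (t - s₀) * f (t/2) := by
        refine le_trans (min_le_right _ _) ?_
        calc (f (t/2) / (-g 0)) ^ p ≤ f (t/2) * (w (t/2))⁻¹ := h6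
          _ ≤ f (t/2) * (t - s₀) := by
              apply mul_le_mul_of_nonneg_left h5 (hfpos _).le
          _ = (t - s₀) * f (t/2) := mul_comm _ _
      exact mul_le_mul_of_nonneg_left h13 (Real.exp_pos _).le
  have hDpos : ∀ t : ℝ, 0 < t → 0 < D t := by
    intro t ht
    refine lt_of_lt_of_le ?_ (hlb t ht)
    have hG0 : 0 < -g 0 := lt_of_lt_of_le hc (hgc 0)
    have h1 : 0 < (t/2) * f (t/2) := mul_pos (half_pos ht) (hfpos _)
    have h2 : 0 < (f (t/2) / (-g 0)) ^ p :=
      Real.rpow_pos_of_pos (div_pos (hfpos _) hG0) p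
    have := Real.exp_pos (-2:ℝ)
    exact mul_pos this (lt_min h1 h2)
  -- pointwise comparison constants
  have hG0 : 0 < -g 0 := lt_of_lt_of_le hc (hgc 0)
  have hGq : 0 < (-g 0) ^ (1/q) := Real.rpow_pos_of_pos hG0 _
  have hcq : 0 < c ^ (1/q) := Real.rpow_pos_of_pos hc _
  have he2 : Real.exp (-2) ^ ((1:ℝ)/2) = Real.exp (-1) := by
    rw [← Real.exp_mul]; norm_num
  set κ : ℝ := min (1/2) ((2:ℝ) ^ ((1:ℝ)/2) * c ^ (1/q) / 2) with hκdef
  have hκ : 0 < κ := lt_min (by norm_num) (by positivity)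
  set C : ℝ := Real.exp 1 * (1 + (-g 0) ^ (1/q)) with hCdef
  have hC : 0 < C := mul_pos (Real.exp_pos 1) (by nlinarith [hGq])
  -- pointwise lower bound (for the ⟸ direction)
  have hlow : ∀ t : ℝ, 0 < t →
      κ * (1 / (t * f t) ^ ((1:ℝ)/2) + 1 / f t ^ (1/q)) ≤ 1 / D t ^ ((1:ℝ)/2) := by
    intro t ht
    have hD := hDpos t ht
    clear_value D
    have hDr : 0 < D t ^ ((1:ℝ)/2) := Real.rpow_pos_of_pos hD _
    have htf : 0 < t * f t := mul_pos ht (hfpos t)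
    have hT1n : 0 ≤ 1 / (t * f t) ^ ((1:ℝ)/2) :=
      (div_pos one_pos (Real.rpow_pos_of_pos htf _)).le
    have hT2n : 0 ≤ 1 / f t ^ (1/q) :=
      (div_pos one_pos (Real.rpow_pos_of_pos (hfpos t) _)).le
    have hT1 : 1 / (t * f t) ^ ((1:ℝ)/2) ≤ 1 / D t ^ ((1:ℝ)/2) := by
      apply one_div_le_one_div_of_le hDr
      exact Real.rpow_le_rpow hD.le (hub1 t ht) (by norm_num)
    have hA : (0:ℝ) < (c / f t) ^ p := Real.rpow_pos_of_pos (div_pos hc (hfpos t)) p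
    have hX : (0:ℝ) < 2 * (c / f t) ^ p := by linarith
    have h1 : D t ^ ((1:ℝ)/2) ≤ (1 / (2 * (c / f t) ^ p)) ^ ((1:ℝ)/2) :=
      Real.rpow_le_rpow hD.le (hub2 t ht) (by norm_num)
    have h2 : (1 / (2 * (c / f t) ^ p)) ^ ((1:ℝ)/2)
        = ((2 * (c / f t) ^ p) ^ ((1:ℝ)/2))⁻¹ := by
      rw [one_div, Real.inv_rpow hX.le]
    have h3 : (2 * (c / f t) ^ p) ^ ((1:ℝ)/2) ≤ 1 / D t ^ ((1:ℝ)/2) := by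
      have h3' := one_div_le_one_div_of_le hDr (h2 ▸ h1)
      rwa [one_div (((2 * (c / f t) ^ p) ^ ((1:ℝ)/2))⁻¹), inv_inv] at h3'
    have h4 : (2 * (c / f t) ^ p) ^ ((1:ℝ)/2)
        = (2:ℝ) ^ ((1:ℝ)/2) * (c ^ (1/q) / f t ^ (1/q)) := by
      rw [Real.mul_rpow (by norm_num) hA.le,
        ← Real.rpow_mul (div_pos hc (hfpos t)).le, hpq,
        Real.div_rpow hc.le (hfpos t).le]
    rw [h4] at h3
    have h5 : (2:ℝ) ^ ((1:ℝ)/2) * c ^ (1/q) * (1 / f t ^ (1/q)) ≤ 1 / D t ^ ((1:ℝ)/2) := by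
      refine le_trans (le_of_eq ?_) h3
      field_simp
    have hκ1 : κ ≤ 1/2 := by rw [hκdef]; exact min_le_left _ _
    have hκ2 : κ ≤ (2:ℝ) ^ ((1:ℝ)/2) * c ^ (1/q) / 2 := by
      rw [hκdef]; exact min_le_right _ _
    clear_value κ
    have e1 := mul_le_mul_of_nonneg_right hκ1 hT1n
    have e2 := mul_le_mul_of_nonneg_right hκ2 hT2n
    have e3 := mul_le_mul_of_nonneg_left hT1 (by norm_num : (0:ℝ) ≤ 1/2)
    have e4 := mul_le_mul_of_nonneg_left h5 (by norm_num : (0:ℝ) ≤ 1/2)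
    linarith [e1, e2, e3, e4]
  -- pointwise upper bound (for the ⟹ direction)
  have hup : ∀ t : ℝ, 0 < t → 1 / D t ^ ((1:ℝ)/2)
      ≤ C * (1 / (t/2 * f (t/2)) ^ ((1:ℝ)/2) + 1 / f (t/2) ^ (1/q)) := by
    intro t ht
    have hD := hDpos t ht
    clear_value D C
    have hDr : 0 < D t ^ ((1:ℝ)/2) := Real.rpow_pos_of_pos hD _
    have hu : 0 < t/2 := half_pos ht
    have hM1 : 0 < t/2 * f (t/2) := mul_pos hu (hfpos _)
    have hM2 : 0 < (f (t/2) / (-g 0)) ^ p :=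
      Real.rpow_pos_of_pos (div_pos (hfpos _) hG0) p
    have hT1n : 0 ≤ 1 / (t/2 * f (t/2)) ^ ((1:ℝ)/2) :=
      (div_pos one_pos (Real.rpow_pos_of_pos hM1 _)).le
    have hT2n : 0 ≤ 1 / f (t/2) ^ (1/q) :=
      (div_pos one_pos (Real.rpow_pos_of_pos (hfpos _) _)).le
    have hCe : Real.exp 1 ≤ C := by
      rw [hCdef]
      have h := mul_nonneg (Real.exp_pos 1).le hGq.le
      linarith
    rcases le_total (t/2 * f (t/2)) ((f (t/2) / (-g 0)) ^ p) with hmin | hmin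
    · have hDl : Real.exp (-2) * (t/2 * f (t/2)) ≤ D t := by
        have h := hlb t ht
        rwa [min_eq_left hmin] at h
      have h1 : (Real.exp (-2) * (t/2 * f (t/2))) ^ ((1:ℝ)/2) ≤ D t ^ ((1:ℝ)/2) :=
        Real.rpow_le_rpow (mul_nonneg (Real.exp_pos _).le hM1.le) hDl (by norm_num)
      have h2 : (Real.exp (-2) * (t/2 * f (t/2))) ^ ((1:ℝ)/2)
          = Real.exp (-1) * (t/2 * f (t/2)) ^ ((1:ℝ)/2) := by
        rw [Real.mul_rpow (Real.exp_pos _).le hM1.le, he2]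
      have h3 : 1 / D t ^ ((1:ℝ)/2)
          ≤ 1 / (Real.exp (-1) * (t/2 * f (t/2)) ^ ((1:ℝ)/2)) :=
        one_div_le_one_div_of_le
          (mul_pos (Real.exp_pos _) (Real.rpow_pos_of_pos hM1 _)) (h2 ▸ h1)
      have h4 : 1 / (Real.exp (-1) * (t/2 * f (t/2)) ^ ((1:ℝ)/2))
          = Real.exp 1 * (1 / (t/2 * f (t/2)) ^ ((1:ℝ)/2)) := by
        rw [Real.exp_neg]; field_simp
      rw [h4] at h3
      refine h3.trans ?_
      linarith [mul_le_mul_of_nonneg_right hCe hT1n, mul_nonneg hC.le hT2n]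
    · have hDl : Real.exp (-2) * ((f (t/2) / (-g 0)) ^ p) ≤ D t := by
        have h := hlb t ht
        rwa [min_eq_right hmin] at h
      have h1 : (Real.exp (-2) * ((f (t/2) / (-g 0)) ^ p)) ^ ((1:ℝ)/2) ≤ D t ^ ((1:ℝ)/2) :=
        Real.rpow_le_rpow (mul_nonneg (Real.exp_pos _).le hM2.le) hDl (by norm_num)
      have h2 : (Real.exp (-2) * ((f (t/2) / (-g 0)) ^ p)) ^ ((1:ℝ)/2)
          = Real.exp (-1) * (f (t/2) ^ (1/q) / (-g 0) ^ (1/q)) := by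
        rw [Real.mul_rpow (Real.exp_pos _).le hM2.le, he2,
          ← Real.rpow_mul (div_pos (hfpos _) hG0).le, hpq,
          Real.div_rpow (hfpos _).le hG0.le]
      have h3 : 1 / D t ^ ((1:ℝ)/2)
          ≤ 1 / (Real.exp (-1) * (f (t/2) ^ (1/q) / (-g 0) ^ (1/q))) :=
        one_div_le_one_div_of_le
          (mul_pos (Real.exp_pos _)
            (div_pos (Real.rpow_pos_of_pos (hfpos _) _) hGq)) (h2 ▸ h1)
      have h4 : 1 / (Real.exp (-1) * (f (t/2) ^ (1/q) / (-g 0) ^ (1/q)))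
          = Real.exp 1 * (-g 0) ^ (1/q) * (1 / f (t/2) ^ (1/q)) := by
        rw [Real.exp_neg]
        field_simp
      rw [h4] at h3
      refine h3.trans ?_
      have h5 : Real.exp 1 * (-g 0) ^ (1/q) ≤ C := by
        rw [hCdef]
        have h := (Real.exp_pos 1).le
        linarith
      linarith [mul_le_mul_of_nonneg_right h5 hT2n, mul_nonneg hC.le hT1n]
  -- measurability of the right-hand integrand
  have hΦm : Measurable fun u : ℝ =>
      ENNReal.ofReal (1 / (u * f u) ^ ((1:ℝ)/2) + 1 / f u ^ (1/q)) := by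
    apply ENNReal.measurable_ofReal.comp
    apply Measurable.add
    · exact measurable_const.div
        (((continuous_id.mul hf).rpow_const (fun x => Or.inr (by norm_num))).measurable)
    · exact measurable_const.div
        ((hf.rpow_const (fun x => Or.inr (by positivity))).measurable)
  have hscale : (∫⁻ t in Set.Ioi (0:ℝ),
        ENNReal.ofReal (1 / (t/2 * f (t/2)) ^ ((1:ℝ)/2) + 1 / f (t/2) ^ (1/q)))
      = 2 * ∫⁻ u in Set.Ioi (0:ℝ),
          ENNReal.ofReal (1 / (u * f u) ^ ((1:ℝ)/2) + 1 / f u ^ (1/q)) :=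
    scale_lemma (fun u => ENNReal.ofReal (1 / (u * f u) ^ ((1:ℝ)/2) + 1 / f u ^ (1/q))) hΦm
  constructor
  · intro hL
    by_contra hR
    have hb1 : (∫⁻ t in Set.Ioi (0:ℝ), ENNReal.ofReal (1 / D t ^ ((1:ℝ)/2)))
        ≤ ENNReal.ofReal C * ∫⁻ t in Set.Ioi (0:ℝ),
            ENNReal.ofReal (1 / (t/2 * f (t/2)) ^ ((1:ℝ)/2) + 1 / f (t/2) ^ (1/q)) := by
      rw [← lintegral_const_mul' _ _ ENNReal.ofReal_ne_top]
      apply setLIntegral_mono' measurableSet_Ioi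
      intro t ht
      rw [← ENNReal.ofReal_mul hC.le]
      exact ENNReal.ofReal_le_ofReal (hup t ht)
    rw [hscale, hL] at hb1
    exact absurd (top_le_iff.mp hb1)
      (ENNReal.mul_ne_top ENNReal.ofReal_ne_top
        (ENNReal.mul_ne_top (by norm_num) hR))
  · intro hR
    have hb2 : ENNReal.ofReal κ * (∫⁻ t in Set.Ioi (0:ℝ),
          ENNReal.ofReal (1 / (t * f t) ^ ((1:ℝ)/2) + 1 / f t ^ (1/q)))
        ≤ ∫⁻ t in Set.Ioi (0:ℝ), ENNReal.ofReal (1 / D t ^ ((1:ℝ)/2)) := by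
      rw [← lintegral_const_mul' _ _ ENNReal.ofReal_ne_top]
      apply setLIntegral_mono' measurableSet_Ioi
      intro t ht
      rw [← ENNReal.ofReal_mul hκ.le]
      exact ENNReal.ofReal_le_ofReal (hlow t ht)
    rw [hR, ENNReal.mul_top
      (by rw [Ne, ENNReal.ofReal_eq_zero]; exact not_le.mpr hκ)] at hb2
    exact top_le_iff.mp hb2
end
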